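/- arXiv:1207.2263 — 2 statements merged into one kernel-verified Lean document; each statement's English description precedes it below -/
import Mathlib

section
/- Let (Y^1,M^1) and (Y^2,M^2) be solutions of BSDE(ξ^1,f^1+dV^1) and BSDE(ξ^2,f^2+dV^2) on [0,T], respectively, such that Y^1 and Y^2 are of class (D). Assume ξ^1 ≤ ξ^2 a.s., dV^1 ≤ dV^2 (as random measures on [0,T]), and that either (i) f^2 satisfies (H2) and f^1(t,Y^1_t) ≤ f^2(t,Y^1_t) for a.e. t∈[0,T] a.s., or (ii) f^1 satisfies (H2) and f^1(t,Y^2_t) ≤ f^2(t,Y^2_t) for a.e. t∈[0,T] a.s. Then Y^1_t ≤ Y^2_t for all t∈[0,T], P-a.s. -/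
open MeasureTheory Filter Set Topology
open scoped ENNReal NNReal

noncomputable section

variable {Ω : Type*} {m0 : MeasurableSpace Ω}

/-- A real-valued function of time is càdlàg: right-continuous with left limits. -/
def IsCadlagFun (g : ℝ → ℝ) : Prop :=
  ∀ t : ℝ, ContinuousWithinAt g (Set.Ici t) t ∧
    ∃ l : ℝ, Tendsto g (nhdsWithin t (Set.Iio t)) (nhds l)

/-- The total variation `|V|_t` of `g` on the interval `[0, t]`. -/
def varOn (g : ℝ → ℝ) (t : ℝ) : ℝ := (eVariationOn g (Set.Icc 0 t)).toReal

/-- `V` is a càdlàg progressively measurable process of finite variation on `[0,T]`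
with `V 0 = 0`. -/
structure IsFVProcess (ℱ : Filtration ℝ m0) (T : ℝ) (V : ℝ → Ω → ℝ) : Prop where
  cadlag : ∀ ω, IsCadlagFun fun t => V t ω
  zero : ∀ ω, V 0 ω = 0
  prog : ProgMeasurable ℱ V
  finiteVar : ∀ ω, eVariationOn (fun t => V t ω) (Set.Icc 0 T) < ⊤

/-- `M` is a local martingale with respect to `ℱ` under `P`. -/
def IsLocalMartingale (P : Measure Ω) (ℱ : Filtration ℝ m0) (M : ℝ → Ω → ℝ) : Prop :=
  ∃ τ : ℕ → Ω → ℝ, (∀ n, IsStoppingTime ℱ (fun ω => ((τ n ω : ℝ) : WithTop ℝ))) ∧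
    (∀ ω, Tendsto (fun n => τ n ω) atTop atTop) ∧
    ∀ n, Martingale (fun t ω => M (min t (τ n ω)) ω) ℱ P

/-- The process `Y` is of class (D) on `[0,T]`: the family of its values at all stopping
times with values in `[0,T]` is uniformly integrable. -/
def ClassDOn (P : Measure Ω) (ℱ : Filtration ℝ m0) (T : ℝ) (Y : ℝ → Ω → ℝ) : Prop :=
  UniformIntegrable
    (fun τ : {τ : Ω → ℝ // IsStoppingTime ℱ (fun ω => ((τ ω : ℝ) : WithTop ℝ)) ∧ ∀ ω, τ ω ∈ Set.Icc 0 T} =>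
      fun ω => Y (τ.1 ω) ω) 1 P

/-- The process `Y` is of class (D): the family of its values at all finite nonnegative
stopping times is uniformly integrable. -/
def ClassD (P : Measure Ω) (ℱ : Filtration ℝ m0) (Y : ℝ → Ω → ℝ) : Prop :=
  UniformIntegrable
    (fun τ : {τ : Ω → ℝ // IsStoppingTime ℱ (fun ω => ((τ ω : ℝ) : WithTop ℝ)) ∧ ∀ ω, 0 ≤ τ ω} =>
      fun ω => Y (τ.1 ω) ω) 1 P

/-- `(Y, M)` is a solution of the BSDE`(ξ, f + dV)` on `[0, T]`:
`Y` is càdlàg adapted, `M` is a càdlàg local martingale, `t ↦ f(t, Y_t) ∈ L¹(0,T)` and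
`Y_t = ξ + ∫_t^T f(s,Y_s) ds + ∫_t^T dV_s - ∫_t^T dM_s` for `t ∈ [0,T]`. -/
structure IsBSDESol (P : Measure Ω) (ℱ : Filtration ℝ m0) (T : ℝ)
    (ξ : Ω → ℝ) (f : ℝ → Ω → ℝ → ℝ) (V : ℝ → Ω → ℝ)
    (Y M : ℝ → Ω → ℝ) : Prop where
  cadlagY : ∀ᵐ ω ∂P, IsCadlagFun fun t => Y t ω
  adaptedY : Adapted ℱ Y
  cadlagM : ∀ᵐ ω ∂P, IsCadlagFun fun t => M t ω
  locMartM : IsLocalMartingale P ℱ M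
  int_f : ∀ᵐ ω ∂P, IntegrableOn (fun s => f s ω (Y s ω)) (Set.Ioc 0 T)
  eqn : ∀ᵐ ω ∂P, ∀ t ∈ Set.Icc 0 T,
    Y t ω = ξ ω + (∫ s in Set.Ioc t T, f s ω (Y s ω)) + (V T ω - V t ω) - (M T ω - M t ω)

/-- Hypothesis (H1): continuity of `f` in `y`. -/
def H1 (f : ℝ → Ω → ℝ → ℝ) : Prop := ∀ t ω, Continuous fun y => f t ω y

/-- Hypothesis (H2): monotonicity (one-sided Lipschitz with constant 0) of `f` in `y`. -/
def H2 (f : ℝ → Ω → ℝ → ℝ) : Prop :=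
  ∀ t ω y y', (f t ω y - f t ω y') * (y - y') ≤ 0

/-- Hypothesis (H3): for every `r > 0`, `t ↦ sup_{|y| ≤ r} |f(t,y) - f(t,0)| ∈ L¹(0,T)`. -/
def H3 (T : ℝ) (f : ℝ → Ω → ℝ → ℝ) : Prop :=
  ∀ ω, ∀ r > (0:ℝ), IntegrableOn
    (fun t => sSup ((fun y => |f t ω y - f t ω 0|) '' Set.Icc (-r) r)) (Set.Ioc 0 T)

/-- Hypothesis (H4) with exponent `p`:
`E|ξ|^p + E(∫_0^T |f(t,0)| dt)^p + E(∫_0^T d|V|_t)^p < ∞`. -/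
def H4 (P : Measure Ω) (T p : ℝ) (ξ : Ω → ℝ) (f : ℝ → Ω → ℝ → ℝ)
    (V : ℝ → Ω → ℝ) : Prop :=
  (∫⁻ ω, ENNReal.ofReal (|ξ ω| ^ p) ∂P) < ⊤ ∧
  (∫⁻ ω, ENNReal.ofReal ((∫ t in Set.Ioc 0 T, |f t ω 0|) ^ p) ∂P) < ⊤ ∧
  (∫⁻ ω, ENNReal.ofReal (varOn (fun t => V t ω) T ^ p) ∂P) < ⊤

/-- `QV` is the quadratic variation process `[M]` of `M`: the dyadic sums of squared
increments converge in probability to `QV t` for every `t ≥ 0`. -/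
def IsQuadVariation (P : Measure Ω) (M QV : ℝ → Ω → ℝ) : Prop :=
  ∀ t : ℝ, 0 ≤ t → ∀ ε : ℝ, 0 < ε →
    Tendsto (fun n : ℕ =>
      P {ω | ε ≤ |(∑ i ∈ Finset.range (2 ^ n),
          (M (((i : ℝ) + 1) * t / 2 ^ n) ω - M ((i : ℝ) * t / 2 ^ n) ω) ^ 2) - QV t ω|})
      atTop (nhds 0)

/-- `sup_{0 ≤ t ≤ T} |Y_t|`. -/
def supAbsOn (Y : ℝ → Ω → ℝ) (T : ℝ) (ω : Ω) : ℝ := ⨆ t : Set.Icc (0:ℝ) T, |Y t.1 ω|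

/-- `sup_{t ≥ 0} |Y_t|`. -/
def supAbs (Y : ℝ → Ω → ℝ) (ω : Ω) : ℝ := ⨆ t : {t : ℝ // 0 ≤ t}, |Y t.1 ω|


/-- `(Y, M)` is a solution of the BSDE`(ζ, f + dV)` with random (finite) terminal time `ζ`:
`Y` is càdlàg adapted with `Y_{t∧ζ} → 0` as `t → ∞`, `M` is a local martingale, and for
every `T > 0`, `t ↦ f(t,Y_t) ∈ L¹(0,T)` and
`Y_t = Y_{T∧ζ} + ∫_{t∧ζ}^{T∧ζ} f(s,Y_s) ds + ∫_{t∧ζ}^{T∧ζ} dV_s - ∫_{t∧ζ}^{T∧ζ} dM_s`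
for `t ∈ [0,T]`. -/
structure IsBSDESolRT (P : Measure Ω) (ℱ : Filtration ℝ m0)
    (ζ : Ω → ℝ) (f : ℝ → Ω → ℝ → ℝ) (V : ℝ → Ω → ℝ)
    (Y M : ℝ → Ω → ℝ) : Prop where
  cadlagY : ∀ᵐ ω ∂P, IsCadlagFun fun t => Y t ω
  adaptedY : Adapted ℱ Y
  cadlagM : ∀ᵐ ω ∂P, IsCadlagFun fun t => M t ω
  tendsto_zero : ∀ᵐ ω ∂P, Tendsto (fun t : ℝ => Y (min t (ζ ω)) ω) atTop (nhds 0)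
  locMartM : IsLocalMartingale P ℱ M
  int_f : ∀ T > (0:ℝ), ∀ᵐ ω ∂P, IntegrableOn (fun s => f s ω (Y s ω)) (Set.Ioc 0 T)
  eqn : ∀ T > (0:ℝ), ∀ᵐ ω ∂P, ∀ t ∈ Set.Icc 0 T,
    Y t ω = Y (min T (ζ ω)) ω
      + (∫ s in Set.Ioc (min t (ζ ω)) (min T (ζ ω)), f s ω (Y s ω))
      + (V (min T (ζ ω)) ω - V (min t (ζ ω)) ω)
      - (M (min T (ζ ω)) ω - M (min t (ζ ω)) ω)


namespace BSDEAux

variable {Ω : Type*} {m0 : MeasurableSpace Ω} {P : Measure Ω}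

lemma integral_abs_eq_toReal_eLpNorm {f : Ω → ℝ} (hf : Integrable f P) :
    ∫ ω, |f ω| ∂P = (eLpNorm f 1 P).toReal := by
  rw [eLpNorm_one_eq_lintegral_enorm, ← ofReal_integral_norm_eq_lintegral_enorm hf,
    ENNReal.toReal_ofReal (integral_nonneg fun ω => norm_nonneg _)]
  simp [Real.norm_eq_abs]

lemma eLpNorm_eq_ofReal_integral_abs {f : Ω → ℝ} (hf : Integrable f P) :
    eLpNorm f 1 P = ENNReal.ofReal (∫ ω, |f ω| ∂P) := by
  rw [eLpNorm_one_eq_lintegral_enorm, ← ofReal_integral_norm_eq_lintegral_enorm hf]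
  simp [Real.norm_eq_abs]

lemma eLpNorm_indicator_one_eq {f : Ω → ℝ} (hf : Integrable f P) {S : Set Ω}
    (hS : MeasurableSet S) :
    eLpNorm (S.indicator f) 1 P = ENNReal.ofReal (∫ ω in S, |f ω| ∂P) := by
  rw [eLpNorm_indicator_eq_eLpNorm_restrict hS,
    eLpNorm_eq_ofReal_integral_abs (hf.restrict)]

variable [IsProbabilityMeasure P]

/-- Vitali convergence theorem packaged for our use. -/
lemma vitali {W : ℕ → Ω → ℝ} {Wl : Ω → ℝ}
    (hm : ∀ k, AEStronglyMeasurable (W k) P)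
    (hui : UnifIntegrable W 1 P)
    {C : ℝ≥0} (hC : ∀ k, eLpNorm (W k) 1 P ≤ C)
    (hae : ∀ᵐ ω ∂P, Tendsto (fun k => W k ω) atTop (𝓝 (Wl ω))) :
    Integrable Wl P ∧
      ∀ B : Set Ω, MeasurableSet B →
        Tendsto (fun k => ∫ ω in B, W k ω ∂P) atTop (𝓝 (∫ ω in B, Wl ω ∂P)) := by
  have hmeas : AEStronglyMeasurable Wl P := aestronglyMeasurable_of_tendsto_ae atTop hm hae
  have hWl : eLpNorm Wl 1 P ≤ C := by
    refine le_trans (Lp.eLpNorm_lim_le_liminf_eLpNorm hm Wl hae) ?_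
    exact liminf_le_of_frequently_le' (Frequently.of_forall hC)
  have hMl : MemLp Wl 1 P := ⟨hmeas, lt_of_le_of_lt hWl ENNReal.coe_lt_top⟩
  have hIl : Integrable Wl P := memLp_one_iff_integrable.mp hMl
  have hIk : ∀ k, Integrable (W k) P := fun k =>
    memLp_one_iff_integrable.mp ⟨hm k, lt_of_le_of_lt (hC k) ENNReal.coe_lt_top⟩
  have hL1 : Tendsto (fun k => eLpNorm (W k - Wl) 1 P) atTop (𝓝 0) :=
    tendsto_Lp_finite_of_tendsto_ae le_rfl ENNReal.one_ne_top hm hMl hui hae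
  refine ⟨hIl, fun B hB => ?_⟩
  rw [tendsto_iff_dist_tendsto_zero]
  have hbd : ∀ k, dist (∫ ω in B, W k ω ∂P) (∫ ω in B, Wl ω ∂P)
      ≤ (eLpNorm (W k - Wl) 1 P).toReal := by
    intro k
    rw [Real.dist_eq, ← integral_sub ((hIk k).restrict) (hIl.restrict)]
    have h1 : |∫ ω in B, (W k ω - Wl ω) ∂P| ≤ ∫ ω in B, |W k ω - Wl ω| ∂P := by
      simpa [Real.norm_eq_abs] using
        norm_integral_le_integral_norm (μ := P.restrict B) (f := fun ω => W k ω - Wl ω)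
    have h2 : ∫ ω in B, |W k ω - Wl ω| ∂P ≤ ∫ ω, |W k ω - Wl ω| ∂P := by
      refine setIntegral_le_integral ((hIk k).sub hIl).abs ?_
      exact Eventually.of_forall fun ω => abs_nonneg _
    calc |∫ ω in B, (W k ω - Wl ω) ∂P| ≤ ∫ ω in B, |W k ω - Wl ω| ∂P := h1
      _ ≤ ∫ ω, |W k ω - Wl ω| ∂P := h2
      _ = (eLpNorm (fun ω => W k ω - Wl ω) 1 P).toReal :=
          integral_abs_eq_toReal_eLpNorm ((hIk k).sub hIl)
      _ = (eLpNorm (W k - Wl) 1 P).toReal := rfl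
  have h0 : Tendsto (fun k => (eLpNorm (W k - Wl) 1 P).toReal) atTop (𝓝 0) := by
    have := (ENNReal.tendsto_toReal ENNReal.zero_ne_top).comp hL1
    simpa [Function.comp_def] using this
  exact squeeze_zero (fun k => dist_nonneg) hbd h0



variable {Ω : Type*} {m0 : MeasurableSpace Ω} {P : Measure Ω}


lemma rep_eval (G : ℝ → Ω → ℝ) {ρ : Ω → ℝ} {V : Finset ℝ} (hρV : ∀ ω, ρ ω ∈ V) (ω : Ω) :
    G (ρ ω) ω = ∑ v ∈ V, Set.indicator {ω' | ρ ω' = v} (fun ω' => G v ω') ω := by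
  rw [Finset.sum_eq_single_of_mem (ρ ω) (hρV ω)]
  · rw [Set.indicator_of_mem]
    exact rfl
  · intro v hv hne
    apply Set.indicator_of_notMem
    simp only [Set.mem_setOf_eq]
    exact fun h => hne h.symm

variable {ℱ : Filtration ℝ m0}

lemma stronglyMeasurable_eval {N : ℝ → Ω → ℝ} (hN : StronglyAdapted ℱ N) {ρ : Ω → ℝ} {V : Finset ℝ}
    (hρV : ∀ ω, ρ ω ∈ V) (hmeas : ∀ v : ℝ, MeasurableSet[ℱ v] {ω | ρ ω = v}) :
    StronglyMeasurable (fun ω => N (ρ ω) ω) := by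
  have : (fun ω => N (ρ ω) ω)
      = fun ω => ∑ v ∈ V, Set.indicator {ω' | ρ ω' = v} (fun ω' => N v ω') ω :=
    funext fun ω => rep_eval N hρV ω
  rw [this]
  refine Finset.stronglyMeasurable_fun_sum _ fun v _ => ?_
  exact ((hN v).mono (ℱ.le v)).indicator (ℱ.le v _ (hmeas v))

variable [IsProbabilityMeasure P]

lemma integrable_eval {N : ℝ → Ω → ℝ} (hN : Martingale N ℱ P) {ρ : Ω → ℝ} {V : Finset ℝ}
    (hρV : ∀ ω, ρ ω ∈ V) (hmeas : ∀ v : ℝ, MeasurableSet[ℱ v] {ω | ρ ω = v}) :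
    Integrable (fun ω => N (ρ ω) ω) P := by
  have : (fun ω => N (ρ ω) ω)
      = fun ω => ∑ v ∈ V, Set.indicator {ω' | ρ ω' = v} (fun ω' => N v ω') ω :=
    funext fun ω => rep_eval N hρV ω
  rw [this]
  refine integrable_finset_sum _ fun v _ => ?_
  exact (hN.integrable v).indicator (ℱ.le v _ (hmeas v))

lemma claimA {N : ℝ → Ω → ℝ} (hN : Martingale N ℱ P)
    {ρ : Ω → ℝ} {T' : ℝ} {V : Finset ℝ}
    (hρV : ∀ ω, ρ ω ∈ V) (hVle : ∀ v ∈ V, v ≤ T')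
    (hmeas : ∀ v : ℝ, MeasurableSet[ℱ v] {ω | ρ ω = v})
    {C : Set Ω} (hCm : MeasurableSet C)
    (hC : ∀ v ∈ V, MeasurableSet[ℱ v] (C ∩ {ω | ρ ω = v})) :
    ∫ ω in C, |N (ρ ω) ω| ∂P ≤ ∫ ω in C, |N T' ω| ∂P := by
  have hg : Integrable (fun ω => |N T' ω|) P := (hN.integrable T').abs
  have habs : ∀ ω, |N (ρ ω) ω| = ∑ v ∈ V, Set.indicator {ω' | ρ ω' = v}
      (fun ω' => |N v ω'|) ω := fun ω => rep_eval (fun v ω' => |N v ω'|) hρV ω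
  have hrepg : ∀ ω, |N T' ω| = ∑ v ∈ V, Set.indicator {ω' | ρ ω' = v}
      (fun ω' => |N T' ω'|) ω := fun ω => rep_eval (fun _ ω' => |N T' ω'|) hρV ω
  calc ∫ ω in C, |N (ρ ω) ω| ∂P
      = ∫ ω in C, ∑ v ∈ V, Set.indicator {ω' | ρ ω' = v} (fun ω' => |N v ω'|) ω ∂P := by
        exact integral_congr_ae (Eventually.of_forall fun ω => habs ω)
    _ = ∑ v ∈ V, ∫ ω in C, Set.indicator {ω' | ρ ω' = v} (fun ω' => |N v ω'|) ω ∂P := by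
        refine integral_finset_sum _ fun v _ => ?_
        exact (((hN.integrable v).abs.indicator (ℱ.le v _ (hmeas v))).restrict)
    _ ≤ ∑ v ∈ V, ∫ ω in C, Set.indicator {ω' | ρ ω' = v} (fun ω' => |N T' ω'|) ω ∂P := by
        refine Finset.sum_le_sum fun v hv => ?_
        rw [setIntegral_indicator (ℱ.le v _ (hmeas v)), setIntegral_indicator (ℱ.le v _ (hmeas v))]
        -- ∫_{C ∩ {ρ = v}} |N v| ≤ ∫_{C ∩ {ρ = v}} |N T'|
        have hvT : v ≤ T' := hVle v hv
        have hcond : N v =ᵐ[P] P[N T' | ℱ v] := (hN.2 v T' hvT).symm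
        have hcondabs : ∀ᵐ ω ∂P, |N v ω| ≤ (P[(fun ω' => |N T' ω'|) | ℱ v]) ω := by
          have h1 : P[N T' | ℱ v] ≤ᵐ[P] P[(fun ω' => |N T' ω'|) | ℱ v] :=
            condExp_mono (hN.integrable T') hg
              (Eventually.of_forall fun ω => le_abs_self _)
          have h2 : P[(fun ω' => -(N T' ω')) | ℱ v] ≤ᵐ[P] P[(fun ω' => |N T' ω'|) | ℱ v] :=
            condExp_mono (hN.integrable T').neg hg
              (Eventually.of_forall fun ω => neg_le_abs _)
          have h3 : P[(fun ω' => -(N T' ω')) | ℱ v] =ᵐ[P] fun ω => -(P[N T' | ℱ v]) ω :=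
            condExp_neg _ _
          filter_upwards [hcond, h1, h2, h3] with ω hω h1ω h2ω h3ω
          rw [hω]
          rw [abs_le]
          constructor
          · have := h2ω
            rw [h3ω] at this
            linarith
          · exact h1ω
        have hmeasCv : MeasurableSet (C ∩ {ω | ρ ω = v}) := ℱ.le v _ (hC v hv)
        calc ∫ ω in C ∩ {ω' | ρ ω' = v}, |N v ω| ∂P
            ≤ ∫ ω in C ∩ {ω' | ρ ω' = v}, (P[(fun ω' => |N T' ω'|) | ℱ v]) ω ∂P := by
              exact setIntegral_mono_ae ((hN.integrable v).abs.restrict)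
                (integrable_condExp.restrict) hcondabs
          _ = ∫ ω in C ∩ {ω' | ρ ω' = v}, |N T' ω| ∂P :=
              setIntegral_condExp (ℱ.le v) hg (hC v hv)
    _ = ∫ ω in C, |N T' ω| ∂P := by
        rw [← integral_finset_sum]
        · exact integral_congr_ae (Eventually.of_forall fun ω => (hrepg ω).symm)
        · intro v _
          exact ((hg.indicator (ℱ.le v _ (hmeas v))).restrict)

lemma optional_sampling_finite {N : ℝ → Ω → ℝ} (hN : Martingale N ℱ P)
    {ρ : Ω → ℝ} {t T' : ℝ} (htT : t ≤ T') {V : Finset ℝ}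
    (hρV : ∀ ω, ρ ω ∈ V) (hVle : ∀ v ∈ V, t ≤ v ∧ v ≤ T')
    (hmeas : ∀ v : ℝ, MeasurableSet[ℱ v] {ω | ρ ω = v})
    {B : Set Ω} (hB : MeasurableSet[ℱ t] B) :
    ∫ ω in B, N (ρ ω) ω ∂P = ∫ ω in B, N t ω ∂P := by
  have hrep : ∀ ω, N (ρ ω) ω = ∑ v ∈ V, Set.indicator {ω' | ρ ω' = v}
      (fun ω' => N v ω') ω := fun ω => rep_eval N hρV ω
  have hrepg : ∀ ω, N T' ω = ∑ v ∈ V, Set.indicator {ω' | ρ ω' = v}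
      (fun ω' => N T' ω') ω := fun ω => rep_eval (fun _ ω' => N T' ω') hρV ω
  have hBv : ∀ v ∈ V, MeasurableSet[ℱ v] (B ∩ {ω | ρ ω = v}) := fun v hv =>
    MeasurableSet.inter (ℱ.mono (hVle v hv).1 _ hB) (hmeas v)
  have key : ∀ (v : ℝ), v ∈ V → ∫ ω in B ∩ {ω' | ρ ω' = v}, N v ω ∂P
      = ∫ ω in B ∩ {ω' | ρ ω' = v}, N T' ω ∂P := by
    intro v hv
    have hcond : N v =ᵐ[P] P[N T' | ℱ v] := (hN.2 v T' (hVle v hv).2).symm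
    calc ∫ ω in B ∩ {ω' | ρ ω' = v}, N v ω ∂P
        = ∫ ω in B ∩ {ω' | ρ ω' = v}, (P[N T' | ℱ v]) ω ∂P :=
          integral_congr_ae (ae_restrict_of_ae hcond)
      _ = ∫ ω in B ∩ {ω' | ρ ω' = v}, N T' ω ∂P :=
          setIntegral_condExp (ℱ.le v) (hN.integrable T') (hBv v hv)
  calc ∫ ω in B, N (ρ ω) ω ∂P
      = ∑ v ∈ V, ∫ ω in B, Set.indicator {ω' | ρ ω' = v} (fun ω' => N v ω') ω ∂P := by
        rw [← integral_finset_sum]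
        · exact integral_congr_ae (Eventually.of_forall fun ω => hrep ω)
        · exact fun v _ => ((hN.integrable v).indicator (ℱ.le v _ (hmeas v))).restrict
    _ = ∑ v ∈ V, ∫ ω in B ∩ {ω' | ρ ω' = v}, N v ω ∂P := by
        refine Finset.sum_congr rfl fun v _ => ?_
        rw [setIntegral_indicator (ℱ.le v _ (hmeas v))]
    _ = ∑ v ∈ V, ∫ ω in B ∩ {ω' | ρ ω' = v}, N T' ω ∂P :=
        Finset.sum_congr rfl key
    _ = ∑ v ∈ V, ∫ ω in B, Set.indicator {ω' | ρ ω' = v} (fun ω' => N T' ω') ω ∂P := by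
        refine Finset.sum_congr rfl fun v _ => ?_
        rw [setIntegral_indicator (ℱ.le v _ (hmeas v))]
    _ = ∫ ω in B, N T' ω ∂P := by
        rw [← integral_finset_sum]
        · exact integral_congr_ae (Eventually.of_forall fun ω => (hrepg ω).symm)
        · exact fun v _ => ((hN.integrable T').indicator (ℱ.le v _ (hmeas v))).restrict
    _ = ∫ ω in B, (P[N T' | ℱ t]) ω ∂P :=
        (setIntegral_condExp (ℱ.le t) (hN.integrable T') hB).symm
    _ = ∫ ω in B, N t ω ∂P :=
        integral_congr_ae (ae_restrict_of_ae (hN.2 t T' htT))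

lemma optional_sampling_ui {N : ℝ → Ω → ℝ} (hN : Martingale N ℱ P) {T' : ℝ}
    {ε : ℝ} (hε : 0 < ε) :
    ∃ δ : ℝ, 0 < δ ∧ ∀ (ρ : Ω → ℝ) (V : Finset ℝ), (∀ ω, ρ ω ∈ V) →
      (∀ v ∈ V, v ≤ T') → (∀ v : ℝ, MeasurableSet[ℱ v] {ω | ρ ω = v}) →
      ∀ S : Set Ω, MeasurableSet S → P S ≤ ENNReal.ofReal δ →
        ∫ ω in S, |N (ρ ω) ω| ∂P ≤ ε := by
  have hg : Integrable (fun ω => |N T' ω|) P := (hN.integrable T').abs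
  have hgm : MemLp (fun ω => |N T' ω|) 1 P := memLp_one_iff_integrable.mpr hg
  obtain ⟨δ', hδ', hgsmall⟩ := hgm.eLpNorm_indicator_le le_rfl ENNReal.one_ne_top
    (half_pos hε)
  have hgsmall' : ∀ S : Set Ω, MeasurableSet S → P S ≤ ENNReal.ofReal δ' →
      ∫ ω in S, |N T' ω| ∂P ≤ ε / 2 := by
    intro S hS hPS
    have h1 := hgsmall S hS hPS
    rw [eLpNorm_indicator_one_eq hg hS] at h1
    have h2 : ∫ ω in S, |(|N T' ω|)| ∂P = ∫ ω in S, |N T' ω| ∂P := by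
      refine integral_congr_ae (Eventually.of_forall fun ω => abs_abs _)
    rw [h2] at h1
    exact (ENNReal.ofReal_le_ofReal_iff (half_pos hε).le).mp h1
  set I : ℝ := ∫ ω, |N T' ω| ∂P with hI
  have hI0 : 0 ≤ I := integral_nonneg fun ω => abs_nonneg _
  set K : ℝ := (I + 1) / δ' with hK
  have hK0 : 0 < K := div_pos (by linarith) hδ'
  refine ⟨min δ' (ε / (2 * K)), lt_min hδ' (div_pos hε (by positivity)), ?_⟩
  intro ρ V hρV hVle hmeas S hS hPS
  have hδ0 : (0:ℝ) ≤ min δ' (ε / (2 * K)) := le_min hδ'.le (by positivity)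
  have hint : Integrable (fun ω => N (ρ ω) ω) P := integrable_eval hN hρV hmeas
  have hsm : StronglyMeasurable (fun ω => N (ρ ω) ω) :=
    stronglyMeasurable_eval hN.stronglyAdapted hρV hmeas
  set C : Set Ω := {ω | K < |N (ρ ω) ω|} with hCdef
  have hCm : MeasurableSet C :=
    measurableSet_lt measurable_const hsm.measurable.abs
  have hCv : ∀ v ∈ V, MeasurableSet[ℱ v] (C ∩ {ω | ρ ω = v}) := by
    intro v hv
    have h1 : C ∩ {ω | ρ ω = v} = {ω | K < |N v ω|} ∩ {ω | ρ ω = v} := by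
      ext ω
      simp only [hCdef, Set.mem_inter_iff, Set.mem_setOf_eq]
      constructor
      · rintro ⟨h1, h2⟩
        subst h2
        exact ⟨h1, rfl⟩
      · rintro ⟨h1, h2⟩
        subst h2
        exact ⟨h1, rfl⟩
    rw [h1]
    have hlt : MeasurableSet[ℱ v] {ω | K < |N v ω|} :=
      (hN.stronglyAdapted v).norm.measurable measurableSet_Ioi
    exact hlt.inter (hmeas v)
  have hclaim := claimA hN hρV hVle hmeas hCm hCv
  have h3 : ∫ ω in C, |N T' ω| ∂P ≤ I :=
    setIntegral_le_integral hg (Eventually.of_forall fun ω => abs_nonneg _)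
  have hmark : (P C).toReal * K ≤ I := by
    have h1 : ∫ ω in C, (K : ℝ) ∂P ≤ ∫ ω in C, |N (ρ ω) ω| ∂P :=
      setIntegral_mono_on (integrableOn_const (measure_ne_top _ _))
        hint.abs.restrict hCm fun ω hω => le_of_lt hω
    rw [setIntegral_const, smul_eq_mul] at h1
    exact le_trans h1 (le_trans hclaim h3)
  have hPC : P C ≤ ENNReal.ofReal δ' := by
    have h1 : (P C).toReal ≤ I / K := by
      rw [le_div_iff₀ hK0]
      exact hmark
    have h2 : I / K ≤ δ' := by
      rw [hK, div_div_eq_mul_div, div_le_iff₀ (by linarith : (0:ℝ) < I + 1)]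
      nlinarith
    calc P C = ENNReal.ofReal (P C).toReal := (ENNReal.ofReal_toReal (measure_ne_top P C)).symm
      _ ≤ ENNReal.ofReal δ' := ENNReal.ofReal_le_ofReal (le_trans h1 h2)
  have hsplit : (∫ ω in S ∩ C, |N (ρ ω) ω| ∂P) + ∫ ω in S \ C, |N (ρ ω) ω| ∂P
      = ∫ ω in S, |N (ρ ω) ω| ∂P := integral_inter_add_diff hCm hint.abs.integrableOn
  have hb1 : ∫ ω in S ∩ C, |N (ρ ω) ω| ∂P ≤ ε / 2 := by
    have hmono : ∫ ω in S ∩ C, |N (ρ ω) ω| ∂P ≤ ∫ ω in C, |N (ρ ω) ω| ∂P := by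
      refine setIntegral_mono_set hint.abs.integrableOn
        (Eventually.of_forall fun ω => abs_nonneg _) ?_
      exact HasSubset.Subset.eventuallyLE Set.inter_subset_right
    exact le_trans hmono (le_trans hclaim (hgsmall' C hCm hPC))
  have hb2 : ∫ ω in S \ C, |N (ρ ω) ω| ∂P ≤ ε / 2 := by
    have h1 : ∫ ω in S \ C, |N (ρ ω) ω| ∂P ≤ ∫ ω in S \ C, (K : ℝ) ∂P := by
      refine setIntegral_mono_on hint.abs.restrict
        (integrableOn_const (measure_ne_top _ _)) (hS.diff hCm) ?_
      intro ω hω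
      exact le_of_not_gt hω.2
    rw [setIntegral_const, smul_eq_mul] at h1
    have h2 : (P (S \ C)).toReal ≤ min δ' (ε / (2 * K)) := by
      refine ENNReal.toReal_le_of_le_ofReal hδ0 ?_
      exact le_trans (measure_mono Set.diff_subset) hPS
    have h3 : (P (S \ C)).toReal * K ≤ (ε / (2 * K)) * K := by
      refine mul_le_mul_of_nonneg_right (le_trans h2 (min_le_right _ _)) hK0.le
    have h4 : (ε / (2 * K)) * K = ε / 2 := by
      field_simp
    simp only [measureReal_def] at h1
    linarith
  linarith [hsplit, hb1, hb2]



variable {Ω : Type*} {m0 : MeasurableSpace Ω}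

/-- round `x` strictly up to the grid `t + j (T-t)/2^k`, capped at `T`. -/
def gridPt (t T : ℝ) (k : ℕ) (x : ℝ) : ℝ :=
  min T (t + ((T - t) / 2 ^ k) * ((⌊(x - t) / ((T - t) / 2 ^ k)⌋₊ : ℝ) + 1))

section GridReal
variable {t T x : ℝ} {k : ℕ}

lemma grid_h_pos (ht : t < T) : 0 < (T - t) / 2 ^ k :=
  div_pos (sub_pos.2 ht) (pow_pos two_pos k)

lemma grid_le_T (htT : t ≤ T) : gridPt t T k x ≤ T := min_le_left _ _

lemma grid_ge_t (htT : t ≤ T) : t ≤ gridPt t T k x := by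
  have hh : 0 ≤ (T - t) / 2 ^ k := div_nonneg (sub_nonneg.2 htT) (pow_pos two_pos k).le
  refine le_min htT ?_
  have : 0 ≤ ((T - t) / 2 ^ k) * ((⌊(x - t) / ((T - t) / 2 ^ k)⌋₊ : ℝ) + 1) := by positivity
  linarith

lemma grid_lt_self (ht : t < T) (hx : x ∈ Icc t T) : x ≤ gridPt t T k x := by
  have hh : 0 < (T - t) / 2 ^ k := grid_h_pos ht
  refine le_min hx.2 ?_
  have h1 : (x - t) / ((T - t) / 2 ^ k) < (⌊(x - t) / ((T - t) / 2 ^ k)⌋₊ : ℝ) + 1 :=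
    Nat.lt_floor_add_one _
  have := (div_lt_iff₀ hh).mp h1
  linarith

lemma grid_le_add (ht : t < T) (hx : x ∈ Icc t T) :
    gridPt t T k x ≤ x + (T - t) / 2 ^ k := by
  have hh : 0 < (T - t) / 2 ^ k := grid_h_pos ht
  refine le_trans (min_le_right _ _) ?_
  have h0 : 0 ≤ (x - t) / ((T - t) / 2 ^ k) := div_nonneg (by linarith [hx.1]) hh.le
  have h1 : ((⌊(x - t) / ((T - t) / 2 ^ k)⌋₊ : ℝ)) ≤ (x - t) / ((T - t) / 2 ^ k) :=
    Nat.floor_le h0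
  have := (le_div_iff₀ hh).mp h1
  have hmul : ((T - t) / 2 ^ k) * ((⌊(x - t) / ((T - t) / 2 ^ k)⌋₊ : ℝ) + 1)
      ≤ (x - t) + (T - t) / 2 ^ k := by
    rw [mul_add, mul_one]
    have : ((T - t) / 2 ^ k) * ((⌊(x - t) / ((T - t) / 2 ^ k)⌋₊ : ℝ)) ≤ x - t := by
      rw [mul_comm]; exact this
    linarith
  linarith

lemma grid_eq_T_iff (ht : t < T) (hx : x ∈ Icc t T) :
    gridPt t T k x = T ↔ T - (T - t) / 2 ^ k ≤ x := by
  have hh : 0 < (T - t) / 2 ^ k := grid_h_pos ht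
  constructor
  · intro hT
    by_contra hcon
    push_neg at hcon
    have := grid_le_add ht hx (k := k)
    rw [hT] at this
    linarith
  · intro hle
    have hpow : ((T - t) / 2 ^ k) * (2 ^ k : ℝ) = T - t := by
      field_simp
    have hfl : (2 ^ k - 1 : ℕ) ≤ ⌊(x - t) / ((T - t) / 2 ^ k)⌋₊ := by
      apply Nat.le_floor
      rw [le_div_iff₀ hh]
      push_cast [Nat.cast_sub (Nat.one_le_two_pow)]
      nlinarith
    have hfl' : (2 ^ k - 1 : ℝ) ≤ (⌊(x - t) / ((T - t) / 2 ^ k)⌋₊ : ℝ) := by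
      calc (2 ^ k - 1 : ℝ) = ((2 ^ k - 1 : ℕ) : ℝ) := by
            push_cast [Nat.cast_sub (Nat.one_le_two_pow)]
            ring
        _ ≤ _ := Nat.cast_le.mpr hfl
    have : T ≤ t + ((T - t) / 2 ^ k) * ((⌊(x - t) / ((T - t) / 2 ^ k)⌋₊ : ℝ) + 1) := by
      nlinarith
    rw [gridPt, min_eq_left this]

lemma grid_ne_of_not_grid (ht : t < T) {v : ℝ} (hvT : v < T)
    (hno : ¬ ∃ m : ℕ, v = t + ((T - t) / 2 ^ k) * ((m : ℝ) + 1)) :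
    gridPt t T k x ≠ v := by
  intro hv
  rcases le_or_gt T (t + ((T - t) / 2 ^ k) * ((⌊(x - t) / ((T - t) / 2 ^ k)⌋₊ : ℝ) + 1)) with h | h
  · rw [gridPt, min_eq_left h] at hv
    exact absurd hv.symm (ne_of_lt hvT)
  · rw [gridPt, min_eq_right h.le] at hv
    exact hno ⟨_, hv.symm⟩

lemma grid_eq_val_iff (ht : t < T) (hx : x ∈ Icc t T) {v : ℝ} (hvT : v < T) {m : ℕ}
    (hv : v = t + ((T - t) / 2 ^ k) * ((m : ℝ) + 1)) :
    gridPt t T k x = v ↔ (v - (T - t) / 2 ^ k ≤ x ∧ x < v) := by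
  have hh : 0 < (T - t) / 2 ^ k := grid_h_pos ht
  have hx0 : 0 ≤ (x - t) / ((T - t) / 2 ^ k) := div_nonneg (by linarith [hx.1]) hh.le
  constructor
  · intro hgv
    rcases le_or_gt T (t + ((T - t) / 2 ^ k) * ((⌊(x - t) / ((T - t) / 2 ^ k)⌋₊ : ℝ) + 1))
      with h | h
    · rw [gridPt, min_eq_left h] at hgv
      exact absurd hgv.symm (ne_of_lt hvT)
    · rw [gridPt, min_eq_right h.le] at hgv
      rw [hv] at hgv
      have hjm' : ⌊(x - t) / ((T - t) / 2 ^ k)⌋₊ = m := by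
        have h2 : ((T - t) / 2 ^ k) * ((⌊(x - t) / ((T - t) / 2 ^ k)⌋₊ : ℝ) + 1)
            = ((T - t) / 2 ^ k) * ((m : ℝ) + 1) := by linarith
        have h3 := mul_left_cancel₀ (ne_of_gt hh) h2
        have h4 : (⌊(x - t) / ((T - t) / 2 ^ k)⌋₊ : ℝ) = (m : ℝ) := by linarith
        exact_mod_cast h4
      have hiff := Nat.floor_eq_iff (R := ℝ) hx0 (n := m)
      rw [hiff] at hjm'
      obtain ⟨hlo, hhi⟩ := hjm'
      rw [le_div_iff₀ hh] at hlo
      rw [div_lt_iff₀ hh] at hhi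
      constructor
      · rw [hv]; nlinarith
      · rw [hv]; nlinarith
  · rintro ⟨hlo, hhi⟩
    have hfl : ⌊(x - t) / ((T - t) / 2 ^ k)⌋₊ = m := by
      rw [Nat.floor_eq_iff hx0]
      constructor
      · rw [le_div_iff₀ hh]
        rw [hv] at hlo
        nlinarith
      · rw [div_lt_iff₀ hh]
        rw [hv] at hhi
        push_cast
        nlinarith
    rw [gridPt, hfl, ← hv]
    exact min_eq_right hvT.le

end GridReal

section GridOmega
variable {ℱ : Filtration ℝ m0}

def gridVals (t T : ℝ) (k : ℕ) : Finset ℝ :=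
  (Finset.range (2 ^ k + 1)).image (fun m : ℕ => min T (t + ((T - t) / 2 ^ k) * ((m : ℝ) + 1)))

lemma gridPt_self (t : ℝ) (k : ℕ) {x : ℝ} (hx : x ∈ Icc t t) : gridPt t t k x = t := by
  have hx' : x = t := le_antisymm hx.2 hx.1
  simp [gridPt, hx']

lemma grid_mem_vals {t T : ℝ} (htT : t ≤ T) {x : ℝ} (hx : x ∈ Icc t T) (k : ℕ) :
    gridPt t T k x ∈ gridVals t T k := by
  rcases eq_or_lt_of_le htT with rfl | ht
  · rw [gridPt_self t k hx]
    refine Finset.mem_image.mpr ⟨0, Finset.mem_range.mpr (Nat.succ_pos _), ?_⟩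
    simp
  · have hle : (x - t) / ((T - t) / 2 ^ k) ≤ ((2 ^ k : ℕ) : ℝ) := by
      rw [div_le_iff₀ (grid_h_pos ht)]
      have h2 : ((T - t) / 2 ^ k) * (2 ^ k : ℝ) = T - t := by field_simp
      push_cast
      nlinarith [hx.2]
    have hj : ⌊(x - t) / ((T - t) / 2 ^ k)⌋₊ ≤ 2 ^ k :=
      le_trans (Nat.floor_mono hle) (le_of_eq (Nat.floor_natCast _))
    exact Finset.mem_image.mpr ⟨⌊(x - t) / ((T - t) / 2 ^ k)⌋₊,
      Finset.mem_range.mpr (Nat.lt_succ_of_le hj), rfl⟩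

lemma grid_level_meas (ℱ : Filtration ℝ m0) {t T : ℝ} (htT : t ≤ T) {η : Ω → ℝ}
    (hlt : ∀ u : ℝ, MeasurableSet[ℱ u] {ω | η ω < u})
    (hmem : ∀ ω, η ω ∈ Icc t T) (k : ℕ) (v : ℝ) :
    MeasurableSet[ℱ v] {ω | gridPt t T k (η ω) = v} := by
  rcases eq_or_lt_of_le htT with rfl | ht
  · by_cases hvT : v = t
    · have : {ω | gridPt t t k (η ω) = v} = Set.univ := by
        ext ω
        simp [gridPt_self t k (hmem ω), hvT]
      rw [this]
      exact @MeasurableSet.univ _ (ℱ v)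
    · have : {ω | gridPt t t k (η ω) = v} = ∅ := by
        ext ω
        simp only [Set.mem_setOf_eq, Set.mem_empty_iff_false, iff_false,
          gridPt_self t k (hmem ω)]
        exact fun h => hvT h.symm
      rw [this]
      exact @MeasurableSet.empty _ (ℱ v)
  · by_cases hvT : v = T
    · subst hvT
      have hset : {ω | gridPt t v k (η ω) = v}
          = {ω | η ω < v - (v - t) / 2 ^ k}ᶜ := by
        ext ω
        simp only [Set.mem_setOf_eq, Set.mem_compl_iff, not_lt]
        exact grid_eq_T_iff ht (hmem ω)
      rw [hset]
      have h1 : v - (v - t) / 2 ^ k ≤ v := by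
        have := (grid_h_pos (k := k) ht).le
        linarith
      exact ℱ.mono h1 _ (hlt _).compl
    · rcases lt_or_ge v T with hvT' | hvT'
      · by_cases hex : ∃ m : ℕ, v = t + ((T - t) / 2 ^ k) * ((m : ℝ) + 1)
        · obtain ⟨m, hm⟩ := hex
          have hset : {ω | gridPt t T k (η ω) = v}
              = {ω | η ω < v} ∩ {ω | η ω < v - (T - t) / 2 ^ k}ᶜ := by
            ext ω
            simp only [Set.mem_setOf_eq, Set.mem_inter_iff, Set.mem_compl_iff, not_lt]
            rw [grid_eq_val_iff ht (hmem ω) hvT' hm]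
            tauto
          rw [hset]
          refine (hlt v).inter ?_
          have h1 : v - (T - t) / 2 ^ k ≤ v := by
            have := (grid_h_pos (k := k) ht).le
            linarith
          exact ℱ.mono h1 _ (hlt _).compl
        · have hset : {ω | gridPt t T k (η ω) = v} = ∅ := by
            ext ω
            simp only [Set.mem_setOf_eq, Set.mem_empty_iff_false, iff_false]
            exact grid_ne_of_not_grid ht hvT' hex
          rw [hset]
          exact @MeasurableSet.empty _ (ℱ v)
      · have hset : {ω | gridPt t T k (η ω) = v} = ∅ := by
          ext ω
          simp only [Set.mem_setOf_eq, Set.mem_empty_iff_false, iff_false]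
          intro hcon
          have := grid_le_T (x := η ω) (k := k) ht.le
          rw [hcon] at this
          rcases lt_or_eq_of_le hvT' with h | h
          · linarith
          · exact hvT h.symm
        rw [hset]
        exact @MeasurableSet.empty _ (ℱ v)

lemma grid_isStoppingTime (ℱ : Filtration ℝ m0) {t T : ℝ} (htT : t ≤ T) {η : Ω → ℝ}
    (hlt : ∀ u : ℝ, MeasurableSet[ℱ u] {ω | η ω < u})
    (hmem : ∀ ω, η ω ∈ Icc t T) (k : ℕ) :
    IsStoppingTime ℱ (fun ω => ((gridPt t T k (η ω) : ℝ) : WithTop ℝ)) := by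
  intro u
  simp only [WithTop.coe_le_coe]
  have hset : {ω | gridPt t T k (η ω) ≤ u}
      = ⋃ v ∈ ((gridVals t T k).filter (fun v => v ≤ u) : Finset ℝ),
          {ω | gridPt t T k (η ω) = v} := by
    ext ω
    simp only [Set.mem_setOf_eq, Set.mem_iUnion, Finset.mem_filter, exists_prop]
    constructor
    · intro h
      exact ⟨gridPt t T k (η ω), ⟨grid_mem_vals htT (hmem ω) k, h⟩, rfl⟩
    · rintro ⟨v, ⟨_, hvu⟩, hv⟩
      rw [hv]
      exact hvu
  rw [hset]
  refine Finset.measurableSet_biUnion _ fun v hv => ?_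
  exact ℱ.mono (Finset.mem_filter.mp hv).2 _ (grid_level_meas ℱ htT hlt hmem k v)

end GridOmega




/-- candidate times at which the path `Z` dips below `ε` (rationals in `[t,T)` and `T`). -/
def hitSet (Z : ℝ → ℝ) (t T ε : ℝ) : Set ℝ :=
  insert T {x | x ∈ Set.Ico t T ∧ (∃ q : ℚ, (q : ℝ) = x) ∧ Z x < ε}

def hitInf (Z : ℝ → ℝ) (t T ε : ℝ) : ℝ := sInf (hitSet Z t T ε)

variable {Z : ℝ → ℝ} {t T ε : ℝ}

lemma hitSet_nonempty : T ∈ hitSet Z t T ε := Set.mem_insert _ _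

lemma hitSet_bdd (htT : t ≤ T) : ∀ x ∈ hitSet Z t T ε, t ≤ x ∧ x ≤ T := by
  rintro x (rfl | ⟨hx, _, _⟩)
  · exact ⟨htT, le_rfl⟩
  · exact ⟨hx.1, hx.2.le⟩

lemma hitSet_bddBelow (htT : t ≤ T) : BddBelow (hitSet Z t T ε) :=
  ⟨t, fun x hx => (hitSet_bdd htT x hx).1⟩

lemma hitInf_mem_Icc (htT : t ≤ T) : hitInf Z t T ε ∈ Set.Icc t T :=
  ⟨le_csInf ⟨T, hitSet_nonempty⟩ fun x hx => (hitSet_bdd htT x hx).1,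
    csInf_le (hitSet_bddBelow htT) hitSet_nonempty⟩

lemma hitInf_lt_iff (htT : t ≤ T) {u : ℝ} :
    hitInf Z t T ε < u ↔ ∃ x ∈ hitSet Z t T ε, x < u :=
  csInf_lt_iff (hitSet_bddBelow htT) ⟨T, hitSet_nonempty⟩

/-- before the hitting time, the path stays `≥ ε`. -/
lemma hitInf_ge_before (htT : t ≤ T) (rc : ∀ s, ContinuousWithinAt Z (Set.Ici s) s)
    {s : ℝ} (hts : t ≤ s) (hs : s < hitInf Z t T ε) : ε ≤ Z s := by
  by_contra hcon
  push_neg at hcon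
  have hsT : s < T := lt_of_lt_of_le hs (hitInf_mem_Icc htT).2
  have hnb : Z ⁻¹' (Set.Iio ε) ∈ nhdsWithin s (Set.Ici s) :=
    (rc s) (isOpen_Iio.mem_nhds hcon)
  obtain ⟨δ, hδ, hball⟩ := Metric.mem_nhdsWithin_iff.mp hnb
  have hlt : s < min (s + δ) (hitInf Z t T ε) := lt_min (by linarith) hs
  obtain ⟨q, hq1, hq2⟩ := exists_rat_btwn hlt
  have hq2' : (q : ℝ) < hitInf Z t T ε := lt_of_lt_of_le hq2 (min_le_right _ _)
  have hqball : (q : ℝ) ∈ Metric.ball s δ ∩ Set.Ici s := by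
    constructor
    · rw [Metric.mem_ball, Real.dist_eq, abs_of_pos (by linarith : (0:ℝ) < (q:ℝ) - s)]
      have := lt_of_lt_of_le hq2 (min_le_left _ _)
      linarith
    · exact le_of_lt hq1
  have hZq : Z q < ε := hball hqball
  have hqmem : (q : ℝ) ∈ hitSet Z t T ε := by
    refine Set.mem_insert_of_mem _ ⟨⟨le_trans hts hq1.le, ?_⟩, ⟨q, rfl⟩, hZq⟩
    exact lt_of_lt_of_le hq2' (hitInf_mem_Icc htT).2
  exact absurd (csInf_le (hitSet_bddBelow htT) hqmem) (not_le.mpr hq2')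

/-- at the hitting time, the path is `≤ ε`. -/
lemma hitInf_le_at (htT : t ≤ T) (rc : ∀ s, ContinuousWithinAt Z (Set.Ici s) s)
    (hZT : Z T < ε) : Z (hitInf Z t T ε) ≤ ε := by
  set σ := hitInf Z t T ε with hσ
  have hseq : ∀ m : ℕ, ∃ x, x ∈ hitSet Z t T ε ∧ x < σ + 1 / (m + 1) := by
    intro m
    have : σ < σ + 1 / (m + 1) := by
      have : (0:ℝ) < 1 / (m + 1) := by positivity
      linarith
    obtain ⟨x, hx1, hx2⟩ := (hitInf_lt_iff htT).mp this
    exact ⟨x, hx1, hx2⟩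
  choose x hxmem hxlt using hseq
  have hxge : ∀ m, σ ≤ x m := fun m => csInf_le (hitSet_bddBelow htT) (hxmem m)
  have hxtend : Tendsto x atTop (𝓝 σ) := by
    have h1 : Tendsto (fun m : ℕ => σ + 1 / (m + 1 : ℝ)) atTop (𝓝 σ) := by
      have := tendsto_one_div_add_atTop_nhds_zero_nat (𝕜 := ℝ)
      have h2 := Tendsto.const_add σ this
      simpa using h2
    exact tendsto_of_tendsto_of_tendsto_of_le_of_le tendsto_const_nhds h1 hxge
      fun m => (hxlt m).le
  have hxtend' : Tendsto x atTop (nhdsWithin σ (Set.Ici σ)) :=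
    tendsto_nhdsWithin_of_tendsto_nhds_of_eventually_within _ hxtend
      (Eventually.of_forall hxge)
  have hZx : ∀ m, Z (x m) < ε := by
    intro m
    rcases hxmem m with h | h
    · rw [h]; exact hZT
    · exact h.2.2
  have : Tendsto (fun m => Z (x m)) atTop (𝓝 (Z σ)) := (rc σ).tendsto.comp hxtend'
  exact le_of_tendsto this (Eventually.of_forall fun m => (hZx m).le)


section Extras
variable {Ω : Type*} {m0 : MeasurableSpace Ω} {P : Measure Ω} {ℱ : Filtration ℝ m0}

lemma grid_bounds {t T : ℝ} (htT : t ≤ T) {x : ℝ} (hx : x ∈ Icc t T) (k : ℕ) :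
    x ≤ gridPt t T k x ∧ gridPt t T k x ≤ x + (T - t) / 2 ^ k := by
  rcases eq_or_lt_of_le htT with rfl | ht
  · rw [gridPt_self t k hx]
    have hx' : x = t := le_antisymm hx.2 hx.1
    constructor
    · rw [hx']
    · rw [hx']
      simp
  · exact ⟨grid_lt_self ht hx, grid_le_add ht hx⟩

lemma gridVals_mem_Icc {t T : ℝ} (htT : t ≤ T) {k : ℕ} :
    ∀ v ∈ gridVals t T k, t ≤ v ∧ v ≤ T := by
  intro v hv
  obtain ⟨m, _, rfl⟩ := Finset.mem_image.mp hv
  have hh : 0 ≤ (T - t) / 2 ^ k := div_nonneg (sub_nonneg.2 htT) (pow_pos two_pos k).le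
  refine ⟨le_min htT ?_, min_le_left _ _⟩
  have : 0 ≤ ((T - t) / 2 ^ k) * ((m : ℝ) + 1) := by positivity
  linarith

lemma gridTendsto {t T : ℝ} (htT : t ≤ T) {x : ℝ} (hx : x ∈ Icc t T) :
    Tendsto (fun k : ℕ => gridPt t T k x) atTop (nhdsWithin x (Ici x)) := by
  have hb := fun k => grid_bounds htT hx k
  have hh : Tendsto (fun k : ℕ => x + (T - t) / 2 ^ k) atTop (𝓝 x) := by
    have h1 : Tendsto (fun k : ℕ => (T - t) * (2⁻¹ : ℝ) ^ k) atTop (𝓝 0) := by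
      have := tendsto_pow_atTop_nhds_zero_of_lt_one
        (by norm_num : (0:ℝ) ≤ 2⁻¹) (by norm_num : (2⁻¹ : ℝ) < 1)
      simpa using this.const_mul (T - t)
    have h2 : (fun k : ℕ => x + (T - t) / 2 ^ k) = fun k => x + (T - t) * (2⁻¹) ^ k := by
      funext k
      rw [div_eq_mul_inv, inv_pow]
    rw [h2]
    simpa using tendsto_const_nhds.add h1
  have htends : Tendsto (fun k : ℕ => gridPt t T k x) atTop (𝓝 x) :=
    tendsto_of_tendsto_of_tendsto_of_le_of_le tendsto_const_nhds hh
      (fun k => (hb k).1) (fun k => (hb k).2)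
  exact tendsto_nhdsWithin_of_tendsto_nhds_of_eventually_within _ htends
    (Eventually.of_forall fun k => (hb k).1)

variable [IsProbabilityMeasure P] {T : ℝ} {Y : ℝ → Ω → ℝ}

lemma classD_aesm (hD : ClassDOn P ℱ T Y) {c : Ω → ℝ} (h1 : IsStoppingTime ℱ (fun ω => ((c ω : ℝ) : WithTop ℝ)))
    (h2 : ∀ ω, c ω ∈ Icc 0 T) : AEStronglyMeasurable (fun ω => Y (c ω) ω) P :=
  hD.1 ⟨c, h1, h2⟩

lemma classD_integrable (hD : ClassDOn P ℱ T Y) {c : Ω → ℝ} (h1 : IsStoppingTime ℱ (fun ω => ((c ω : ℝ) : WithTop ℝ)))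
    (h2 : ∀ ω, c ω ∈ Icc 0 T) : Integrable (fun ω => Y (c ω) ω) P := by
  obtain ⟨C, hC⟩ := hD.2.2
  exact memLp_one_iff_integrable.mp ⟨hD.1 ⟨c, h1, h2⟩,
    lt_of_le_of_lt (hC ⟨c, h1, h2⟩) ENNReal.coe_lt_top⟩

lemma classD_sub_unifIntegrable {Y₂ : ℝ → Ω → ℝ} (hD₁ : ClassDOn P ℱ T Y)
    (hD₂ : ClassDOn P ℱ T Y₂)
    {c : ℕ → Ω → ℝ} (h1 : ∀ k, IsStoppingTime ℱ (fun ω => ((c k ω : ℝ) : WithTop ℝ))) (h2 : ∀ k ω, c k ω ∈ Icc 0 T) :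
    UnifIntegrable (fun k ω => Y (c k ω) ω - Y₂ (c k ω) ω) 1 P := by
  intro ε hε
  obtain ⟨δ₁, hδ₁, hb₁⟩ := hD₁.2.1 (half_pos hε)
  obtain ⟨δ₂, hδ₂, hb₂⟩ := hD₂.2.1 (half_pos hε)
  refine ⟨min δ₁ δ₂, lt_min hδ₁ hδ₂, fun k s hs hsP => ?_⟩
  have e1 := hb₁ ⟨c k, h1 k, h2 k⟩ s hs
    (le_trans hsP (ENNReal.ofReal_le_ofReal (min_le_left _ _)))
  have e2 := hb₂ ⟨c k, h1 k, h2 k⟩ s hs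
    (le_trans hsP (ENNReal.ofReal_le_ofReal (min_le_right _ _)))
  have hrw : s.indicator (fun ω => Y (c k ω) ω - Y₂ (c k ω) ω)
      = (s.indicator fun ω => Y (c k ω) ω) - (s.indicator fun ω => Y₂ (c k ω) ω) := by
    funext ω
    by_cases hω : ω ∈ s <;> simp [Set.indicator_apply, hω]
  rw [hrw]
  refine le_trans (eLpNorm_sub_le ((hD₁.1 ⟨c k, h1 k, h2 k⟩).indicator hs)
    ((hD₂.1 ⟨c k, h1 k, h2 k⟩).indicator hs) le_rfl) ?_
  calc eLpNorm (s.indicator fun ω => Y (c k ω) ω) 1 P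
        + eLpNorm (s.indicator fun ω => Y₂ (c k ω) ω) 1 P
      ≤ ENNReal.ofReal (ε / 2) + ENNReal.ofReal (ε / 2) := add_le_add e1 e2
    _ = ENNReal.ofReal ε := by
        rw [← ENNReal.ofReal_add (half_pos hε).le (half_pos hε).le, add_halves]


lemma classD_sub_bound {Y₂ : ℝ → Ω → ℝ} (hD₁ : ClassDOn P ℱ T Y)
    (hD₂ : ClassDOn P ℱ T Y₂) {ε : ℝ} (hε : 0 < ε) :
    ∃ δ : ℝ, 0 < δ ∧ ∀ (c : Ω → ℝ), IsStoppingTime ℱ (fun ω => ((c ω : ℝ) : WithTop ℝ)) → (∀ ω, c ω ∈ Icc 0 T) →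
      ∀ s : Set Ω, MeasurableSet s → P s ≤ ENNReal.ofReal δ →
        eLpNorm (s.indicator fun ω => Y (c ω) ω - Y₂ (c ω) ω) 1 P ≤ ENNReal.ofReal ε := by
  obtain ⟨δ₁, hδ₁, hb₁⟩ := hD₁.2.1 (half_pos hε)
  obtain ⟨δ₂, hδ₂, hb₂⟩ := hD₂.2.1 (half_pos hε)
  refine ⟨min δ₁ δ₂, lt_min hδ₁ hδ₂, fun c h1 h2 s hs hsP => ?_⟩
  have e1 := hb₁ ⟨c, h1, h2⟩ s hs
    (le_trans hsP (ENNReal.ofReal_le_ofReal (min_le_left _ _)))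
  have e2 := hb₂ ⟨c, h1, h2⟩ s hs
    (le_trans hsP (ENNReal.ofReal_le_ofReal (min_le_right _ _)))
  have hrw : s.indicator (fun ω => Y (c ω) ω - Y₂ (c ω) ω)
      = (s.indicator fun ω => Y (c ω) ω) - (s.indicator fun ω => Y₂ (c ω) ω) := by
    funext ω
    by_cases hω : ω ∈ s <;> simp [Set.indicator_apply, hω]
  rw [hrw]
  refine le_trans (eLpNorm_sub_le ((hD₁.1 ⟨c, h1, h2⟩).indicator hs)
    ((hD₂.1 ⟨c, h1, h2⟩).indicator hs) le_rfl) ?_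
  calc eLpNorm (s.indicator fun ω => Y (c ω) ω) 1 P
        + eLpNorm (s.indicator fun ω => Y₂ (c ω) ω) 1 P
      ≤ ENNReal.ofReal (ε / 2) + ENNReal.ofReal (ε / 2) := add_le_add e1 e2
    _ = ENNReal.ofReal ε := by
        rw [← ENNReal.ofReal_add (half_pos hε).le (half_pos hε).le, add_halves]


end Extras


end BSDEAux
open BSDEAux


namespace BSDEAux

set_option maxHeartbeats 2000000 in
lemma key_step
    (P : Measure Ω) [IsProbabilityMeasure P] (ℱ : Filtration ℝ m0) (T : ℝ) (hT : 0 ≤ T)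
    (ξ₁ ξ₂ : Ω → ℝ) (f₁ f₂ : ℝ → Ω → ℝ → ℝ) (V₁ V₂ : ℝ → Ω → ℝ)
    (Y₁ M₁ Y₂ M₂ : ℝ → Ω → ℝ)
    (hsol₁ : IsBSDESol P ℱ T ξ₁ f₁ V₁ Y₁ M₁)
    (hsol₂ : IsBSDESol P ℱ T ξ₂ f₂ V₂ Y₂ M₂)
    (hD₁ : ClassDOn P ℱ T Y₁) (hD₂ : ClassDOn P ℱ T Y₂)
    (hξ : ∀ᵐ ω ∂P, ξ₁ ω ≤ ξ₂ ω)
    (hdV : ∀ᵐ ω ∂P, MonotoneOn (fun s => V₂ s ω - V₁ s ω) (Set.Icc 0 T))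
    (hsign : ∀ᵐ ω ∂P, ∀ᵐ s ∂(volume.restrict (Set.Ioc (0:ℝ) T)),
        Y₂ s ω < Y₁ s ω → f₁ s ω (Y₁ s ω) ≤ f₂ s ω (Y₂ s ω))
    {t : ℝ} (ht : t ∈ Set.Icc 0 T) :
    ∀ᵐ ω ∂P, Y₁ t ω ≤ Y₂ t ω := by
  classical
  have ht0 : 0 ≤ t := ht.1
  have htT : t ≤ T := ht.2
  obtain ⟨τ₁, hτ₁s, hτ₁t, hτ₁m⟩ := hsol₁.locMartM
  obtain ⟨τ₂, hτ₂s, hτ₂t, hτ₂m⟩ := hsol₂.locMartM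
  obtain ⟨C₁, hC₁⟩ := hD₁.2.2
  obtain ⟨C₂, hC₂⟩ := hD₂.2.2
  have hYtInt : Integrable (fun ω => Y₁ t ω - Y₂ t ω) P :=
    (classD_integrable hD₁ (isStoppingTime_const ℱ t) fun _ => ht).sub
      (classD_integrable hD₂ (isStoppingTime_const ℱ t) fun _ => ht)
  -- terminal condition
  have hYT : ∀ᵐ ω ∂P, Y₁ T ω - Y₂ T ω ≤ 0 := by
    filter_upwards [hsol₁.eqn, hsol₂.eqn, hξ] with ω h1 h2 h3
    have e1 := h1 T ⟨hT, le_rfl⟩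
    have e2 := h2 T ⟨hT, le_rfl⟩
    rw [Set.Ioc_self] at e1 e2
    simp only [Measure.restrict_empty, integral_zero_measure, sub_self, add_zero] at e1 e2
    rw [e1, e2]
    linarith
  have main : ∀ ε : ℝ, 0 < ε → P {ω | 2 * ε < Y₁ t ω - Y₂ t ω} = 0 := by
    intro ε hε
    set σ : Ω → ℝ := fun ω => hitInf (fun s => Y₁ s ω - Y₂ s ω) t T ε with hσdef
    have hσmem : ∀ ω : Ω, σ ω ∈ Set.Icc t T := fun ω => hitInf_mem_Icc htT
    have hσlt : ∀ u : ℝ, MeasurableSet[ℱ u] {ω | σ ω < u} := by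
      intro u
      have hset : {ω | σ ω < u} = ({ω : Ω | T < u} ∪ ⋃ q : ℚ,
          {ω | (q : ℝ) ∈ Set.Ico t T ∧ (q : ℝ) < u ∧ Y₁ q ω - Y₂ q ω < ε}) := by
        ext ω
        simp only [Set.mem_setOf_eq, Set.mem_union, Set.mem_iUnion, hσdef]
        rw [hitInf_lt_iff htT]
        constructor
        · rintro ⟨x, hx, hxu⟩
          rcases hx with rfl | ⟨hxIco, ⟨q, rfl⟩, hxZ⟩
          · exact Or.inl hxu
          · exact Or.inr ⟨q, hxIco, hxu, hxZ⟩
        · rintro (h | ⟨q, h1, h2, h3⟩)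
          · exact ⟨T, hitSet_nonempty, h⟩
          · exact ⟨q, Set.mem_insert_of_mem _ ⟨h1, ⟨q, rfl⟩, h3⟩, h2⟩
      rw [hset]
      refine MeasurableSet.union ?_ (MeasurableSet.iUnion fun q => ?_)
      · by_cases hTu : T < u
        · have : {ω : Ω | T < u} = Set.univ := by
            ext ω; simp [hTu]
          rw [this]; exact @MeasurableSet.univ _ (ℱ u)
        · have : {ω : Ω | T < u} = ∅ := by
            ext ω; simp [hTu]
          rw [this]; exact @MeasurableSet.empty _ (ℱ u)
      · by_cases hq : (q : ℝ) ∈ Set.Ico t T ∧ (q : ℝ) < u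
        · have hrw : {ω | (q : ℝ) ∈ Set.Ico t T ∧ (q : ℝ) < u ∧ Y₁ q ω - Y₂ q ω < ε}
              = {ω | Y₁ q ω - Y₂ q ω < ε} := by
            ext ω; simp [hq.1, hq.2]
          rw [hrw]
          refine ℱ.mono hq.2.le _ ?_
          exact ((hsol₁.adaptedY q).sub (hsol₂.adaptedY q)) measurableSet_Iio
        · have hrw : {ω | (q : ℝ) ∈ Set.Ico t T ∧ (q : ℝ) < u ∧ Y₁ q ω - Y₂ q ω < ε} = ∅ := by
            ext ω
            simp only [Set.mem_setOf_eq, Set.mem_empty_iff_false, iff_false]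
            intro hcon
            exact hq ⟨hcon.1, hcon.2.1⟩
          rw [hrw]; exact @MeasurableSet.empty _ (ℱ u)
    set A : Set Ω := {ω | 2 * ε < Y₁ t ω - Y₂ t ω} with hAdef
    have hAf : MeasurableSet[ℱ t] A :=
      ((hsol₁.adaptedY t).sub (hsol₂.adaptedY t)) measurableSet_Ioi
    have hAm : MeasurableSet A := ℱ.le t _ hAf
    -- the auxiliary random times
    set η : ℕ → Ω → ℝ := fun n ω =>
      min (σ ω) (min (min (max (τ₁ n ω) t) T) (min (max (τ₂ n ω) t) T)) with hηdef
    have hηmem : ∀ n ω, η n ω ∈ Set.Icc t T := by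
      intro n ω
      constructor
      · refine le_min (hσmem ω).1 (le_min (le_min (le_max_right _ _) htT)
          (le_min (le_max_right _ _) htT))
      · exact le_trans (min_le_left _ _) (hσmem ω).2
    have hθlt : ∀ (τ : Ω → ℝ), IsStoppingTime ℱ (fun ω => ((τ ω : ℝ) : WithTop ℝ)) → ∀ u : ℝ,
        MeasurableSet[ℱ u] {ω | min (max (τ ω) t) T < u} := by
      intro τ hτ u
      by_cases hTu : T < u
      · have : {ω : Ω | min (max (τ ω) t) T < u} = Set.univ := by
          ext ω
          simp only [Set.mem_setOf_eq, Set.mem_univ, iff_true]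
          exact lt_of_le_of_lt (min_le_right _ _) hTu
        rw [this]; exact @MeasurableSet.univ _ (ℱ u)
      · by_cases htu : t < u
        · have : {ω : Ω | min (max (τ ω) t) T < u} = {ω | τ ω < u} := by
            ext ω
            simp only [Set.mem_setOf_eq, min_lt_iff, max_lt_iff]
            constructor
            · rintro (⟨h1, _⟩ | h)
              · exact h1
              · exact absurd h hTu
            · intro h
              exact Or.inl ⟨h, htu⟩
          rw [this]
          simpa using hτ.measurableSet_lt u
        · have : {ω : Ω | min (max (τ ω) t) T < u} = ∅ := by
            ext ω
            simp only [Set.mem_setOf_eq, Set.mem_empty_iff_false, iff_false, not_lt]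
            push_neg at htu
            exact le_min (le_trans htu (le_max_right _ _)) (le_trans htu htT)
          rw [this]; exact @MeasurableSet.empty _ (ℱ u)
    have hηlt : ∀ n (u : ℝ), MeasurableSet[ℱ u] {ω | η n ω < u} := by
      intro n u
      have hset : {ω | η n ω < u} = {ω | σ ω < u}
          ∪ ({ω | min (max (τ₁ n ω) t) T < u} ∪ {ω | min (max (τ₂ n ω) t) T < u}) := by
        ext ω
        simp only [Set.mem_setOf_eq, Set.mem_union, hηdef, min_lt_iff]
      rw [hset]
      exact (hσlt u).union ((hθlt (τ₁ n) (hτ₁s n) u).union (hθlt (τ₂ n) (hτ₂s n) u))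
    set c : ℕ → ℕ → Ω → ℝ := fun n k ω => gridPt t T k (η n ω) with hcdef
    have hcst : ∀ n k, IsStoppingTime ℱ (fun ω => ((c n k ω : ℝ) : WithTop ℝ)) := fun n k =>
      grid_isStoppingTime ℱ htT (hηlt n) (hηmem n) k
    have hcmem : ∀ n k ω, c n k ω ∈ Set.Icc t T := fun n k ω =>
      ⟨grid_ge_t htT, grid_le_T htT⟩
    have hcmem0 : ∀ n k ω, c n k ω ∈ Set.Icc 0 T := fun n k ω =>
      ⟨le_trans ht0 (hcmem n k ω).1, (hcmem n k ω).2⟩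
    have hctend : ∀ n ω, Tendsto (fun k => c n k ω) atTop
        (nhdsWithin (η n ω) (Set.Ici (η n ω))) := fun n ω => gridTendsto htT (hηmem n ω)
    set B : ℕ → Set Ω := fun n => A ∩ {ω | t < τ₁ n ω} ∩ {ω | t < τ₂ n ω} with hBdef
    have hBf : ∀ n, MeasurableSet[ℱ t] (B n) := fun n =>
      (hAf.inter (by simpa using (hτ₁s n).measurableSet_gt t)).inter (by simpa using (hτ₂s n).measurableSet_gt t)
    have hBm : ∀ n, MeasurableSet (B n) := fun n => ℱ.le t _ (hBf n)
    set Fa : ℕ → Ω → ℝ := fun n ω => Y₁ (η n ω) ω - Y₂ (η n ω) ω with hFadef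
    -- a.e. convergence of the Y-difference along the discretisation
    have hYae : ∀ n, ∀ᵐ ω ∂P, Tendsto (fun k => Y₁ (c n k ω) ω - Y₂ (c n k ω) ω)
        atTop (𝓝 (Fa n ω)) := by
      intro n
      filter_upwards [hsol₁.cadlagY, hsol₂.cadlagY] with ω h1 h2
      have rc : ContinuousWithinAt (fun s => Y₁ s ω - Y₂ s ω)
          (Set.Ici (η n ω)) (η n ω) := ((h1 (η n ω)).1).sub ((h2 (η n ω)).1)
      exact rc.tendsto.comp (hctend n ω)
    have hYaesm : ∀ n k, AEStronglyMeasurable (fun ω => Y₁ (c n k ω) ω - Y₂ (c n k ω) ω) P :=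
      fun n k => (hD₁.1 ⟨c n k, hcst n k, hcmem0 n k⟩).sub (hD₂.1 ⟨c n k, hcst n k, hcmem0 n k⟩)
    have hYbd : ∀ n k, eLpNorm (fun ω => Y₁ (c n k ω) ω - Y₂ (c n k ω) ω) 1 P
        ≤ ((C₁ + C₂ : ℝ≥0) : ℝ≥0∞) := by
      intro n k
      have h1 : (fun ω => Y₁ (c n k ω) ω - Y₂ (c n k ω) ω)
          = (fun ω => Y₁ (c n k ω) ω) - fun ω => Y₂ (c n k ω) ω := rfl
      rw [h1]
      refine le_trans (eLpNorm_sub_le (hD₁.1 ⟨c n k, hcst n k, hcmem0 n k⟩)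
        (hD₂.1 ⟨c n k, hcst n k, hcmem0 n k⟩) le_rfl) ?_
      rw [ENNReal.coe_add]
      exact add_le_add (hC₁ ⟨c n k, hcst n k, hcmem0 n k⟩) (hC₂ ⟨c n k, hcst n k, hcmem0 n k⟩)
    have hYvit : ∀ n, Integrable (Fa n) P ∧ ∀ Bs : Set Ω, MeasurableSet Bs →
        Tendsto (fun k => ∫ ω in Bs, (Y₁ (c n k ω) ω - Y₂ (c n k ω) ω) ∂P) atTop
          (𝓝 (∫ ω in Bs, Fa n ω ∂P)) := fun n =>
      vitali (hYaesm n) (classD_sub_unifIntegrable hD₁ hD₂ (hcst n) (hcmem0 n))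
        (hYbd n) (hYae n)
    -- the martingale part
    have hMart : ∀ (M : ℝ → Ω → ℝ) (τ : ℕ → Ω → ℝ),
        (∀ᵐ ω ∂P, IsCadlagFun fun s => M s ω) →
        (∀ n, Martingale (fun u ω => M (min u (τ n ω)) ω) ℱ P) → ∀ n : ℕ,
        Integrable (fun ω => M (min (η n ω) (τ n ω)) ω) P ∧
        ∀ Bs : Set Ω, MeasurableSet[ℱ t] Bs →
          ∫ ω in Bs, M (min (η n ω) (τ n ω)) ω ∂P
            = ∫ ω in Bs, M (min t (τ n ω)) ω ∂P := by
      intro M τ hcad hmart n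
      have hρV : ∀ k (ω : Ω), c n k ω ∈ gridVals t T k := fun k ω =>
        grid_mem_vals htT (hηmem n ω) k
      have hmeasc : ∀ k (v : ℝ), MeasurableSet[ℱ v] {ω | c n k ω = v} := fun k v =>
        grid_level_meas ℱ htT (hηlt n) (hηmem n) k v
      have hintc : ∀ k, Integrable (fun ω => M (min (c n k ω) (τ n ω)) ω) P := fun k =>
        integrable_eval (hmart n) (hρV k) (hmeasc k)
      have haeN : ∀ᵐ ω ∂P, Tendsto (fun k => M (min (c n k ω) (τ n ω)) ω) atTop
          (𝓝 (M (min (η n ω) (τ n ω)) ω)) := by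
        filter_upwards [hcad] with ω hcM
        have hbnd := fun k => grid_bounds htT (hηmem n ω) k
        have hh : ∀ k : ℕ, (0:ℝ) ≤ (T - t) / 2 ^ k := fun k =>
          div_nonneg (sub_nonneg.2 htT) (pow_pos two_pos k).le
        have h1 : ∀ k, min (η n ω) (τ n ω) ≤ min (c n k ω) (τ n ω) := fun k =>
          min_le_min (hbnd k).1 le_rfl
        have h2 : ∀ k, min (c n k ω) (τ n ω) ≤ min (η n ω) (τ n ω) + (T - t) / 2 ^ k := by
          intro k
          rcases le_total (τ n ω) (η n ω) with hc | hc
          · rw [min_eq_right hc]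
            have := min_le_right (c n k ω) (τ n ω)
            linarith [hh k]
          · rw [min_eq_left hc]
            exact le_trans (min_le_left _ _) (hbnd k).2
        have hhtend : Tendsto (fun k : ℕ => min (η n ω) (τ n ω) + (T - t) / 2 ^ k) atTop
            (𝓝 (min (η n ω) (τ n ω))) := by
          have ha : Tendsto (fun k : ℕ => (T - t) * (2⁻¹ : ℝ) ^ k) atTop (𝓝 0) := by
            have := tendsto_pow_atTop_nhds_zero_of_lt_one
              (by norm_num : (0:ℝ) ≤ 2⁻¹) (by norm_num : (2⁻¹ : ℝ) < 1)
            simpa using this.const_mul (T - t)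
          have hb : (fun k : ℕ => min (η n ω) (τ n ω) + (T - t) / 2 ^ k)
              = fun k => min (η n ω) (τ n ω) + (T - t) * (2⁻¹) ^ k := by
            funext k
            rw [div_eq_mul_inv, inv_pow]
          rw [hb]
          simpa using tendsto_const_nhds.add ha
        have htendmin : Tendsto (fun k => min (c n k ω) (τ n ω)) atTop
            (𝓝 (min (η n ω) (τ n ω))) :=
          tendsto_of_tendsto_of_tendsto_of_le_of_le tendsto_const_nhds hhtend h1 h2
        have htendmin' : Tendsto (fun k => min (c n k ω) (τ n ω)) atTop
            (nhdsWithin (min (η n ω) (τ n ω)) (Set.Ici (min (η n ω) (τ n ω)))) :=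
          tendsto_nhdsWithin_of_tendsto_nhds_of_eventually_within _ htendmin
            (Eventually.of_forall h1)
        exact ((hcM (min (η n ω) (τ n ω))).1).tendsto.comp htendmin'
      have hNui : UnifIntegrable (fun k ω => M (min (c n k ω) (τ n ω)) ω) 1 P := by
        intro ε' hε'
        obtain ⟨δ, hδ, hbd⟩ := optional_sampling_ui (P := P) (hmart n) (T' := T) hε'
        refine ⟨δ, hδ, fun k s hs hsP => ?_⟩
        rw [eLpNorm_indicator_one_eq (hintc k) hs]
        exact ENNReal.ofReal_le_ofReal (hbd (c n k) (gridVals t T k) (hρV k)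
          (fun v hv => (gridVals_mem_Icc htT v hv).2) (hmeasc k) s hs hsP)
      have hIbd : ∀ k, eLpNorm (fun ω => M (min (c n k ω) (τ n ω)) ω) 1 P
          ≤ ENNReal.ofReal (∫ ω, |M (min T (τ n ω)) ω| ∂P) := by
        intro k
        rw [eLpNorm_eq_ofReal_integral_abs (hintc k)]
        refine ENNReal.ofReal_le_ofReal ?_
        have hcl := claimA (P := P) (hmart n) (hρV k)
          (fun v hv => (gridVals_mem_Icc htT v hv).2) (hmeasc k)
          (C := Set.univ) MeasurableSet.univ
          (fun v hv => by
            have := hmeasc k v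
            simpa [Set.univ_inter] using this)
        simpa [Measure.restrict_univ] using hcl
      have hCbd : ∀ k, eLpNorm (fun ω => M (min (c n k ω) (τ n ω)) ω) 1 P
          ≤ (((∫ ω, |M (min T (τ n ω)) ω| ∂P).toNNReal : ℝ≥0) : ℝ≥0∞) := by
        intro k
        refine le_trans (hIbd k) (le_of_eq ?_)
        rfl
      have hvitN := vitali (P := P)
        (W := fun k ω => M (min (c n k ω) (τ n ω)) ω)
        (fun k => (stronglyMeasurable_eval (hmart n).stronglyAdapted (hρV k)
          (hmeasc k)).aestronglyMeasurable)
        hNui hCbd haeN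
      refine ⟨hvitN.1, fun Bs hBs => ?_⟩
      have h1 := hvitN.2 Bs (ℱ.le t _ hBs)
      have h2 : ∀ k, ∫ ω in Bs, M (min (c n k ω) (τ n ω)) ω ∂P
          = ∫ ω in Bs, M (min t (τ n ω)) ω ∂P := fun k =>
        optional_sampling_finite (P := P) (hmart n) htT (hρV k)
          (fun v hv => gridVals_mem_Icc htT v hv) (hmeasc k) hBs
      have h3 : Tendsto (fun _ : ℕ => ∫ ω in Bs, M (min t (τ n ω)) ω ∂P) atTop
          (𝓝 (∫ ω in Bs, M (min (η n ω) (τ n ω)) ω ∂P)) := by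
        refine Tendsto.congr (fun k => h2 k) h1
      exact tendsto_nhds_unique h3 tendsto_const_nhds
    have hM₁ := hMart M₁ τ₁ hsol₁.cadlagM hτ₁m
    have hM₂ := hMart M₂ τ₂ hsol₂.cadlagM hτ₂m
    -- the pathwise inequality
    have hpath : ∀ᵐ ω ∂P, (∀ u, t ≤ u → u ≤ σ ω → u ≤ T →
        Y₁ t ω - Y₂ t ω ≤ (Y₁ u ω - Y₂ u ω)
          - ((M₁ u ω - M₁ t ω) - (M₂ u ω - M₂ t ω)))
        ∧ Y₁ (σ ω) ω - Y₂ (σ ω) ω ≤ ε := by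
      filter_upwards [hsol₁.cadlagY, hsol₂.cadlagY, hsol₁.eqn, hsol₂.eqn, hsol₁.int_f,
        hsol₂.int_f, hsign, hdV, hYT] with ω hc1 hc2 he1 he2 hi1 hi2 hsg hdv hyT
      have rc : ∀ s, ContinuousWithinAt (fun x => Y₁ x ω - Y₂ x ω) (Set.Ici s) s :=
        fun s => ((hc1 s).1).sub ((hc2 s).1)
      have hYTε : Y₁ T ω - Y₂ T ω < ε := lt_of_le_of_lt hyT hε
      constructor
      · intro u htu huσ huT
        have hu0T : u ∈ Set.Icc 0 T := ⟨le_trans ht0 htu, huT⟩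
        have hint1 : IntegrableOn (fun x => f₁ x ω (Y₁ x ω)) (Set.Ioc t u) volume :=
          hi1.mono_set (Set.Ioc_subset_Ioc ht0 huT)
        have hint2 : IntegrableOn (fun x => f₂ x ω (Y₂ x ω)) (Set.Ioc t u) volume :=
          hi2.mono_set (Set.Ioc_subset_Ioc ht0 huT)
        have heqd : ∀ (Yi : ℝ → Ω → ℝ) (ξi : Ω → ℝ) (fi : ℝ → Ω → ℝ → ℝ)
            (Vi Mi : ℝ → Ω → ℝ),
            (∀ s ∈ Set.Icc (0:ℝ) T, Yi s ω = ξi ω + (∫ x in Set.Ioc s T, fi x ω (Yi x ω))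
              + (Vi T ω - Vi s ω) - (Mi T ω - Mi s ω)) →
            IntegrableOn (fun x => fi x ω (Yi x ω)) (Set.Ioc 0 T) volume →
            Yi t ω = Yi u ω + (∫ x in Set.Ioc t u, fi x ω (Yi x ω))
              + (Vi u ω - Vi t ω) - (Mi u ω - Mi t ω) := by
          intro Yi ξi fi Vi Mi heq hint
          have h1 := heq t ht
          have h2 := heq u hu0T
          have hsp : ∫ x in Set.Ioc t T, fi x ω (Yi x ω)
              = (∫ x in Set.Ioc t u, fi x ω (Yi x ω))
                + ∫ x in Set.Ioc u T, fi x ω (Yi x ω) := by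
            rw [← setIntegral_union (Set.Ioc_disjoint_Ioc_of_le le_rfl) measurableSet_Ioc
              (hint.mono_set (Set.Ioc_subset_Ioc ht0 huT))
              (hint.mono_set (Set.Ioc_subset_Ioc (le_trans ht0 htu) le_rfl)),
              Set.Ioc_union_Ioc_eq_Ioc htu huT]
          rw [hsp] at h1
          linarith
        have h1 := heqd Y₁ ξ₁ f₁ V₁ M₁ he1 hi1
        have h2 := heqd Y₂ ξ₂ f₂ V₂ M₂ he2 hi2
        have hsub : (∫ x in Set.Ioc t u, f₁ x ω (Y₁ x ω))
            - (∫ x in Set.Ioc t u, f₂ x ω (Y₂ x ω))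
            = ∫ x in Set.Ioc t u, (f₁ x ω (Y₁ x ω) - f₂ x ω (Y₂ x ω)) :=
          (integral_sub hint1 hint2).symm
        have hneg : ∫ x in Set.Ioc t u, (f₁ x ω (Y₁ x ω) - f₂ x ω (Y₂ x ω)) ≤ 0 := by
          refine integral_nonpos_of_ae ?_
          have hsub' : Set.Ioc t u ⊆ Set.Ioc 0 T := Set.Ioc_subset_Ioc ht0 huT
          have hsg' : ∀ᵐ s ∂(volume.restrict (Set.Ioc t u)),
              Y₂ s ω < Y₁ s ω → f₁ s ω (Y₁ s ω) ≤ f₂ s ω (Y₂ s ω) :=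
            ae_restrict_of_ae_restrict_of_subset hsub' hsg
          have hne : ∀ᵐ s ∂(volume.restrict (Set.Ioc t u)), s ≠ σ ω := by
            refine (ae_iff).mpr ?_
            have hrw : {s : ℝ | ¬ s ≠ σ ω} = {σ ω} := by
              ext s
              simp [not_not]
            rw [hrw]
            refine le_antisymm ?_ zero_le
            calc (volume.restrict (Set.Ioc t u)) {σ ω}
                ≤ volume {σ ω} := Measure.restrict_le_self _
              _ = 0 := Real.volume_singleton
          filter_upwards [hsg', hne, ae_restrict_mem measurableSet_Ioc] with s hs₁ hs₂ hs₃
          have hslt : s < σ ω := lt_of_le_of_ne (le_trans hs₃.2 huσ) hs₂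
          have hge : ε ≤ Y₁ s ω - Y₂ s ω :=
            hitInf_ge_before htT rc hs₃.1.le hslt
          have hlt : Y₂ s ω < Y₁ s ω := by linarith
          have hff := hs₁ hlt
          show f₁ s ω (Y₁ s ω) - f₂ s ω (Y₂ s ω) ≤ 0
          linarith
        have hV : (V₁ u ω - V₂ u ω) - (V₁ t ω - V₂ t ω) ≤ 0 := by
          have := hdv ht hu0T htu
          simp only at this
          linarith
        linarith [h1, h2, hsub, hneg, hV]
      · exact hitInf_le_at htT rc hYTε
    -- the one-step estimate
    have hstep : ∀ n, ∫ ω in B n, (Y₁ t ω - Y₂ t ω) ∂P ≤ ∫ ω in B n, Fa n ω ∂P := by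
      intro n
      obtain ⟨hG₁int, hG₁eq⟩ := hM₁ n
      obtain ⟨hG₂int, hG₂eq⟩ := hM₂ n
      have hg₁int : Integrable (fun ω => M₁ (min t (τ₁ n ω)) ω) P := (hτ₁m n).integrable t
      have hg₂int : Integrable (fun ω => M₂ (min t (τ₂ n ω)) ω) P := (hτ₂m n).integrable t
      have hFaint : Integrable (Fa n) P := (hYvit n).1
      have hres : ∀ᵐ ω ∂(P.restrict (B n)), (Y₁ t ω - Y₂ t ω)
          + ((M₁ (min (η n ω) (τ₁ n ω)) ω - M₁ (min t (τ₁ n ω)) ω)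
            - (M₂ (min (η n ω) (τ₂ n ω)) ω - M₂ (min t (τ₂ n ω)) ω)) ≤ Fa n ω := by
        rw [ae_restrict_iff' (hBm n)]
        filter_upwards [hpath] with ω hp hωB
        obtain ⟨⟨hA', h1τ⟩, h2τ⟩ := hωB
        have hθ₁ : min (max (τ₁ n ω) t) T = min (τ₁ n ω) T := by
          rw [max_eq_left h1τ.le]
        have hθ₂ : min (max (τ₂ n ω) t) T = min (τ₂ n ω) T := by
          rw [max_eq_left h2τ.le]
        have hη₁ : η n ω ≤ τ₁ n ω := by
          refine le_trans (le_trans (min_le_right _ _) (min_le_left _ _)) ?_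
          rw [hθ₁]
          exact min_le_left _ _
        have hη₂ : η n ω ≤ τ₂ n ω := by
          refine le_trans (le_trans (min_le_right _ _) (min_le_right _ _)) ?_
          rw [hθ₂]
          exact min_le_left _ _
        rw [min_eq_left hη₁, min_eq_left hη₂, min_eq_left h1τ.le, min_eq_left h2τ.le]
        have := hp.1 (η n ω) (hηmem n ω).1 (min_le_left _ _) (hηmem n ω).2
        have hFa : Fa n ω = Y₁ (η n ω) ω - Y₂ (η n ω) ω := rfl
        rw [hFa]
        linarith
      have hLHSint : Integrable (fun ω => (Y₁ t ω - Y₂ t ω)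
          + ((M₁ (min (η n ω) (τ₁ n ω)) ω - M₁ (min t (τ₁ n ω)) ω)
            - (M₂ (min (η n ω) (τ₂ n ω)) ω - M₂ (min t (τ₂ n ω)) ω))) P :=
        hYtInt.add ((hG₁int.sub hg₁int).sub (hG₂int.sub hg₂int))
      have hmono : ∫ ω in B n, ((Y₁ t ω - Y₂ t ω)
          + ((M₁ (min (η n ω) (τ₁ n ω)) ω - M₁ (min t (τ₁ n ω)) ω)
            - (M₂ (min (η n ω) (τ₂ n ω)) ω - M₂ (min t (τ₂ n ω)) ω))) ∂P
          ≤ ∫ ω in B n, Fa n ω ∂P :=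
        setIntegral_mono_ae_restrict hLHSint.integrableOn hFaint.integrableOn hres
      have hadd : ∫ ω in B n, ((Y₁ t ω - Y₂ t ω)
          + ((M₁ (min (η n ω) (τ₁ n ω)) ω - M₁ (min t (τ₁ n ω)) ω)
            - (M₂ (min (η n ω) (τ₂ n ω)) ω - M₂ (min t (τ₂ n ω)) ω))) ∂P
          = (∫ ω in B n, (Y₁ t ω - Y₂ t ω) ∂P)
            + ∫ ω in B n, ((M₁ (min (η n ω) (τ₁ n ω)) ω - M₁ (min t (τ₁ n ω)) ω)
              - (M₂ (min (η n ω) (τ₂ n ω)) ω - M₂ (min t (τ₂ n ω)) ω)) ∂P :=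
        integral_add hYtInt.integrableOn
          (((hG₁int.sub hg₁int).sub (hG₂int.sub hg₂int)).integrableOn)
      have hH1 : ∫ ω in B n, ((M₁ (min (η n ω) (τ₁ n ω)) ω - M₁ (min t (τ₁ n ω)) ω)
            - (M₂ (min (η n ω) (τ₂ n ω)) ω - M₂ (min t (τ₂ n ω)) ω)) ∂P
          = (∫ ω in B n, (M₁ (min (η n ω) (τ₁ n ω)) ω - M₁ (min t (τ₁ n ω)) ω) ∂P)
            - ∫ ω in B n, (M₂ (min (η n ω) (τ₂ n ω)) ω - M₂ (min t (τ₂ n ω)) ω) ∂P :=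
        integral_sub ((hG₁int.sub hg₁int).integrableOn) ((hG₂int.sub hg₂int).integrableOn)
      have hH2 : ∫ ω in B n, (M₁ (min (η n ω) (τ₁ n ω)) ω - M₁ (min t (τ₁ n ω)) ω) ∂P
          = (∫ ω in B n, M₁ (min (η n ω) (τ₁ n ω)) ω ∂P)
            - ∫ ω in B n, M₁ (min t (τ₁ n ω)) ω ∂P :=
        integral_sub hG₁int.integrableOn hg₁int.integrableOn
      have hH3 : ∫ ω in B n, (M₂ (min (η n ω) (τ₂ n ω)) ω - M₂ (min t (τ₂ n ω)) ω) ∂P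
          = (∫ ω in B n, M₂ (min (η n ω) (τ₂ n ω)) ω ∂P)
            - ∫ ω in B n, M₂ (min t (τ₂ n ω)) ω ∂P :=
        integral_sub hG₂int.integrableOn hg₂int.integrableOn
      have he₁ := hG₁eq (B n) (hBf n)
      have he₂ := hG₂eq (B n) (hBf n)
      linarith [hmono, hadd, hH1, hH2, hH3, he₁, he₂]
    -- limits as n → ∞
    have hBev : ∀ ω : Ω, ∀ᶠ n in atTop, η n ω = σ ω ∧ ((ω ∈ A → ω ∈ B n)
        ∧ (ω ∉ A → ω ∉ B n)) := by
      intro ω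
      have h1 := (hτ₁t ω).eventually_gt_atTop (max t T)
      have h2 := (hτ₂t ω).eventually_gt_atTop (max t T)
      filter_upwards [h1, h2] with n hn1 hn2
      have ht1 : t < τ₁ n ω := lt_of_le_of_lt (le_max_left _ _) hn1
      have ht2 : t < τ₂ n ω := lt_of_le_of_lt (le_max_left _ _) hn2
      have hT1 : T ≤ τ₁ n ω := (lt_of_le_of_lt (le_max_right _ _) hn1).le
      have hT2 : T ≤ τ₂ n ω := (lt_of_le_of_lt (le_max_right _ _) hn2).le
      constructor
      · have e1 : min (max (τ₁ n ω) t) T = T := by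
          rw [max_eq_left ht1.le, min_eq_right hT1]
        have e2 : min (max (τ₂ n ω) t) T = T := by
          rw [max_eq_left ht2.le, min_eq_right hT2]
        rw [hηdef]
        simp only [e1, e2, min_self]
        exact min_eq_left (hσmem ω).2
      · constructor
        · intro hA'
          exact ⟨⟨hA', ht1⟩, ht2⟩
        · intro hA' hcon
          exact hA' hcon.1.1
    have hlim2pack : Integrable (Set.indicator A (fun ω => Y₁ (σ ω) ω - Y₂ (σ ω) ω)) P ∧
        Tendsto (fun n => ∫ ω in B n, Fa n ω ∂P) atTop
        (𝓝 (∫ ω in A, (Y₁ (σ ω) ω - Y₂ (σ ω) ω) ∂P)) := by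
      have haes : ∀ n, AEStronglyMeasurable (Set.indicator (B n) (Fa n)) P := fun n =>
        (aestronglyMeasurable_of_tendsto_ae atTop (hYaesm n) (hYae n)).indicator (hBm n)
      have hFabd : ∀ n, eLpNorm (Set.indicator (B n) (Fa n)) 1 P
          ≤ ((C₁ + C₂ : ℝ≥0) : ℝ≥0∞) := by
        intro n
        refine le_trans (eLpNorm_indicator_le _) ?_
        refine le_trans (Lp.eLpNorm_lim_le_liminf_eLpNorm (hYaesm n) _ (hYae n)) ?_
        exact liminf_le_of_frequently_le' (Frequently.of_forall (hYbd n))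
      have hui : UnifIntegrable (fun n => Set.indicator (B n) (Fa n)) 1 P := by
        intro ε' hε'
        obtain ⟨δ, hδ, hbd⟩ := classD_sub_bound hD₁ hD₂ hε'
        refine ⟨δ, hδ, fun n s hs hsP => ?_⟩
        rw [Set.indicator_indicator]
        have hstep2 : eLpNorm ((s ∩ B n).indicator (Fa n)) 1 P
            ≤ atTop.liminf (fun k => eLpNorm ((s ∩ B n).indicator
              (fun ω => Y₁ (c n k ω) ω - Y₂ (c n k ω) ω)) 1 P) := by
          refine Lp.eLpNorm_lim_le_liminf_eLpNorm
            (fun k => (hYaesm n k).indicator (hs.inter (hBm n))) _ ?_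
          filter_upwards [hYae n] with ω hω
          by_cases hωs : ω ∈ s ∩ B n
          · simpa [Set.indicator_of_mem hωs] using hω
          · simp only [Set.indicator_of_notMem hωs]
            exact tendsto_const_nhds
        refine le_trans hstep2 (liminf_le_of_frequently_le'
          (Frequently.of_forall fun k => ?_))
        exact hbd (c n k) (hcst n k) (hcmem0 n k) (s ∩ B n) (hs.inter (hBm n))
          (le_trans (measure_mono Set.inter_subset_left) hsP)
      have haelim : ∀ᵐ ω ∂P, Tendsto (fun n => Set.indicator (B n) (Fa n) ω) atTop
          (𝓝 (Set.indicator A (fun ω => Y₁ (σ ω) ω - Y₂ (σ ω) ω) ω)) := by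
        refine Eventually.of_forall fun ω => ?_
        have hev : ∀ᶠ n in atTop, Set.indicator (B n) (Fa n) ω
            = Set.indicator A (fun ω => Y₁ (σ ω) ω - Y₂ (σ ω) ω) ω := by
          filter_upwards [hBev ω] with n hn
          by_cases hA' : ω ∈ A
          · rw [Set.indicator_of_mem (hn.2.1 hA'), Set.indicator_of_mem hA', hFadef]
            simp only [hn.1]
          · rw [Set.indicator_of_notMem (hn.2.2 hA'), Set.indicator_of_notMem hA']
        exact Tendsto.congr' (EventuallyEq.symm hev) tendsto_const_nhds
      have hvit2 := vitali haes hui hFabd haelim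
      have h1 := hvit2.2 Set.univ MeasurableSet.univ
      rw [Measure.restrict_univ] at h1
      have h2 : ∀ n, ∫ ω, Set.indicator (B n) (Fa n) ω ∂P = ∫ ω in B n, Fa n ω ∂P :=
        fun n => integral_indicator (hBm n)
      have h3 : ∫ ω, Set.indicator A (fun ω => Y₁ (σ ω) ω - Y₂ (σ ω) ω) ω ∂P
          = ∫ ω in A, (Y₁ (σ ω) ω - Y₂ (σ ω) ω) ∂P := integral_indicator hAm
      rw [h3] at h1
      exact ⟨hvit2.1, Tendsto.congr h2 h1⟩
    obtain ⟨hYσind, hlim2⟩ := hlim2pack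
    have hlim1 : Tendsto (fun n => ∫ ω in B n, (Y₁ t ω - Y₂ t ω) ∂P) atTop
        (𝓝 (∫ ω in A, (Y₁ t ω - Y₂ t ω) ∂P)) := by
      have h2 : ∀ n, ∫ ω in B n, (Y₁ t ω - Y₂ t ω) ∂P
          = ∫ ω, Set.indicator (B n) (fun ω => Y₁ t ω - Y₂ t ω) ω ∂P :=
        fun n => (integral_indicator (hBm n)).symm
      have h3 : ∫ ω in A, (Y₁ t ω - Y₂ t ω) ∂P
          = ∫ ω, Set.indicator A (fun ω => Y₁ t ω - Y₂ t ω) ω ∂P :=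
        (integral_indicator hAm).symm
      rw [h3]
      refine Tendsto.congr (fun n => (h2 n).symm) ?_
      refine tendsto_integral_of_dominated_convergence
        (fun ω => |Y₁ t ω - Y₂ t ω|)
        (fun n => hYtInt.aestronglyMeasurable.indicator (hBm n)) hYtInt.abs ?_ ?_
      · intro n
        refine Eventually.of_forall fun ω => ?_
        have := norm_indicator_le_norm_self (f := fun ω => Y₁ t ω - Y₂ t ω) (s := B n) (a := ω)
        simpa [Real.norm_eq_abs] using this
      · refine Eventually.of_forall fun ω => ?_
        have hev : ∀ᶠ n in atTop, Set.indicator (B n) (fun ω => Y₁ t ω - Y₂ t ω) ω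
            = Set.indicator A (fun ω => Y₁ t ω - Y₂ t ω) ω := by
          filter_upwards [hBev ω] with n hn
          by_cases hA' : ω ∈ A
          · rw [Set.indicator_of_mem (hn.2.1 hA'), Set.indicator_of_mem hA']
          · rw [Set.indicator_of_notMem (hn.2.2 hA'), Set.indicator_of_notMem hA']
        exact Tendsto.congr' (EventuallyEq.symm hev) tendsto_const_nhds
    have hfinal : ∫ ω in A, (Y₁ t ω - Y₂ t ω) ∂P
        ≤ ∫ ω in A, (Y₁ (σ ω) ω - Y₂ (σ ω) ω) ∂P :=
      le_of_tendsto_of_tendsto' hlim1 hlim2 hstep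
    -- conclude
    have hσle : ∫ ω in A, (Y₁ (σ ω) ω - Y₂ (σ ω) ω) ∂P ≤ ε * (P A).toReal := by
      rw [← integral_indicator hAm]
      have hconst : Integrable (Set.indicator A fun _ : Ω => ε) P :=
        (integrable_const ε).indicator hAm
      have hle : ∀ᵐ ω ∂P, Set.indicator A (fun ω => Y₁ (σ ω) ω - Y₂ (σ ω) ω) ω
          ≤ Set.indicator A (fun _ => ε) ω := by
        filter_upwards [hpath] with ω hp
        by_cases hA' : ω ∈ A
        · rw [Set.indicator_of_mem hA', Set.indicator_of_mem hA']
          exact hp.2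
        · rw [Set.indicator_of_notMem hA', Set.indicator_of_notMem hA']
      have hm := integral_mono_ae hYσind hconst hle
      have hc : ∫ ω, Set.indicator A (fun _ : Ω => ε) ω ∂P = ε * (P A).toReal := by
        rw [integral_indicator hAm, setIntegral_const, smul_eq_mul, mul_comm, measureReal_def]
      rw [hc] at hm
      exact hm
    have htge : 2 * ε * (P A).toReal ≤ ∫ ω in A, (Y₁ t ω - Y₂ t ω) ∂P := by
      have h1 : ∫ _ in A, (2 * ε) ∂P ≤ ∫ ω in A, (Y₁ t ω - Y₂ t ω) ∂P := by
        refine setIntegral_mono_on (integrableOn_const (measure_ne_top _ _))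
          hYtInt.integrableOn hAm fun ω hω => le_of_lt hω
      rw [setIntegral_const, smul_eq_mul, measureReal_def] at h1
      linarith [h1]
    have hPA0 : (P A).toReal = 0 := by
      have hx : (0:ℝ) ≤ (P A).toReal := ENNReal.toReal_nonneg
      nlinarith [hfinal, hσle, htge]
    rcases (ENNReal.toReal_eq_zero_iff (P A)).mp hPA0 with h | h
    · exact h
    · exact absurd h (measure_ne_top P A)
  -- wrap up: a.e. conclusion from the measure-zero sets
  have hnull : P {ω | ¬ Y₁ t ω ≤ Y₂ t ω} = 0 := by
    have hsub : {ω | ¬ Y₁ t ω ≤ Y₂ t ω}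
        ⊆ ⋃ m : ℕ, {ω | 2 * (1 / (m + 1)) < Y₁ t ω - Y₂ t ω} := by
      intro ω hω
      have hpos : 0 < Y₁ t ω - Y₂ t ω := sub_pos.2 (not_le.mp hω)
      obtain ⟨m, hm⟩ := exists_nat_one_div_lt (by positivity : 0 < (Y₁ t ω - Y₂ t ω) / 2)
      refine Set.mem_iUnion.2 ⟨m, ?_⟩
      simp only [Set.mem_setOf_eq]
      rw [lt_div_iff₀ (by norm_num : (0:ℝ) < 2)] at hm
      linarith
    refine measure_mono_null hsub (measure_iUnion_null fun m => main (1 / (m + 1))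
      (by positivity))
  rw [ae_iff]
  exact hnull

end BSDEAux

/-- Comparison principle for solutions of BSDE`(ξ¹, f¹ + dV¹)` and BSDE`(ξ², f² + dV²)`
on `[0,T]` whose first components are of class (D). -/
theorem bsde_comparison
    (P : Measure Ω) [IsProbabilityMeasure P] (ℱ : Filtration ℝ m0) (T : ℝ) (hT : 0 ≤ T)
    (ξ₁ ξ₂ : Ω → ℝ) (f₁ f₂ : ℝ → Ω → ℝ → ℝ) (V₁ V₂ : ℝ → Ω → ℝ)
    (Y₁ M₁ Y₂ M₂ : ℝ → Ω → ℝ)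
    (hV₁ : IsFVProcess ℱ T V₁) (hV₂ : IsFVProcess ℱ T V₂)
    (hsol₁ : IsBSDESol P ℱ T ξ₁ f₁ V₁ Y₁ M₁)
    (hsol₂ : IsBSDESol P ℱ T ξ₂ f₂ V₂ Y₂ M₂)
    (hD₁ : ClassDOn P ℱ T Y₁) (hD₂ : ClassDOn P ℱ T Y₂)
    (hξ : ∀ᵐ ω ∂P, ξ₁ ω ≤ ξ₂ ω)
    (hdV : ∀ᵐ ω ∂P, MonotoneOn (fun t => V₂ t ω - V₁ t ω) (Set.Icc 0 T))
    (hcase :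
      (H2 f₂ ∧ ∀ᵐ ω ∂P, ∀ᵐ t ∂(volume.restrict (Set.Ioc (0:ℝ) T)),
          f₁ t ω (Y₁ t ω) ≤ f₂ t ω (Y₁ t ω)) ∨
      (H2 f₁ ∧ ∀ᵐ ω ∂P, ∀ᵐ t ∂(volume.restrict (Set.Ioc (0:ℝ) T)),
          f₁ t ω (Y₂ t ω) ≤ f₂ t ω (Y₂ t ω))) :
    ∀ᵐ ω ∂P, ∀ t ∈ Set.Icc 0 T, Y₁ t ω ≤ Y₂ t ω := by
  have hsign : ∀ᵐ ω ∂P, ∀ᵐ s ∂(volume.restrict (Set.Ioc (0:ℝ) T)),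
      Y₂ s ω < Y₁ s ω → f₁ s ω (Y₁ s ω) ≤ f₂ s ω (Y₂ s ω) := by
    rcases hcase with ⟨h2, hae⟩ | ⟨h2, hae⟩
    · filter_upwards [hae] with ω hω
      filter_upwards [hω] with s hs hlt
      have hm := h2 s ω (Y₁ s ω) (Y₂ s ω)
      nlinarith [sub_pos.2 hlt]
    · filter_upwards [hae] with ω hω
      filter_upwards [hω] with s hs hlt
      have hm := h2 s ω (Y₁ s ω) (Y₂ s ω)
      nlinarith [sub_pos.2 hlt]
  have hkey : ∀ u ∈ Set.Icc (0:ℝ) T, ∀ᵐ ω ∂P, Y₁ u ω ≤ Y₂ u ω := fun u hu =>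
    BSDEAux.key_step P ℱ T hT ξ₁ ξ₂ f₁ f₂ V₁ V₂ Y₁ M₁ Y₂ M₂ hsol₁ hsol₂ hD₁ hD₂
      hξ hdV hsign hu
  have hctble : ∀ᵐ ω ∂P, ∀ q : ℚ, (q : ℝ) ∈ Set.Icc 0 T → Y₁ q ω ≤ Y₂ q ω := by
    rw [ae_all_iff]
    intro q
    by_cases hq : (q : ℝ) ∈ Set.Icc 0 T
    · filter_upwards [hkey q hq] with ω h _
      exact h
    · filter_upwards with ω h
      exact absurd h hq
  filter_upwards [hctble, hkey T ⟨hT, le_rfl⟩, hsol₁.cadlagY, hsol₂.cadlagY]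
    with ω hq hTω hc1 hc2
  intro u hu
  rcases eq_or_lt_of_le hu.2 with heq | huT
  · rw [heq]
    exact hTω
  · have rc : ContinuousWithinAt (fun s => Y₁ s ω - Y₂ s ω) (Set.Ici u) u :=
      ((hc1 u).1).sub ((hc2 u).1)
    have hseq : ∀ j : ℕ, ∃ q : ℚ, u < (q : ℝ) ∧ (q : ℝ) < min T (u + 1 / (j + 1)) := by
      intro j
      refine exists_rat_btwn (lt_min huT ?_)
      have : (0:ℝ) < 1 / (j + 1) := by positivity
      linarith
    choose qs hq1 hq2 using hseq
    have hqtend : Tendsto (fun j => ((qs j : ℝ))) atTop (nhdsWithin u (Set.Ici u)) := by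
      have hub : ∀ j : ℕ, ((qs j : ℝ)) ≤ u + 1 / (j + 1) := fun j =>
        le_of_lt (lt_of_lt_of_le (hq2 j) (min_le_right _ _))
      have h1 : Tendsto (fun j : ℕ => u + 1 / (j + 1 : ℝ)) atTop (𝓝 u) := by
        have := tendsto_one_div_add_atTop_nhds_zero_nat (𝕜 := ℝ)
        simpa using Tendsto.const_add u this
      have h2 : Tendsto (fun j => ((qs j : ℝ))) atTop (𝓝 u) :=
        tendsto_of_tendsto_of_tendsto_of_le_of_le tendsto_const_nhds h1
          (fun j => (hq1 j).le) hub
      exact tendsto_nhdsWithin_of_tendsto_nhds_of_eventually_within _ h2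
        (Eventually.of_forall fun j => (hq1 j).le)
    have hlim : Tendsto (fun j => Y₁ (qs j) ω - Y₂ (qs j) ω) atTop
        (𝓝 (Y₁ u ω - Y₂ u ω)) := rc.tendsto.comp hqtend
    have hle : ∀ j, Y₁ (qs j) ω - Y₂ (qs j) ω ≤ 0 := by
      intro j
      refine sub_nonpos.2 (hq (qs j) ⟨le_trans hu.1 (hq1 j).le, ?_⟩)
      exact le_of_lt (lt_of_lt_of_le (hq2 j) (min_le_left _ _))
    have := le_of_tendsto hlim (Eventually.of_forall hle)
    linarith

end
end

section
/- Let (Y,M) be a solution of BSDE(ξ,f+dV) on [0,T] such that Y is of class (D). Assume that ξ is F_τ-measurable for some stopping time τ with values in [0,T], that f(·,y)=0 on the stochastic interval (τ,T] for every y∈ℝ, and that ∫_τ^T d|V|_t = 0 a.s. Then (Y_{t∧τ}, M_{t∧τ}) = (Y_t, M_t) for all t∈[0,T], P-a.s.; in particular Y and M are constant on [τ,T]. -/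
open MeasureTheory Filter Set
open scoped Topology ENNReal NNReal

noncomputable section

variable {Ω : Type*} {m0 : MeasurableSpace Ω}

/-- If `ξ` is `F_τ`-measurable, then `1_{τ ≤ t}·ξ` is `F_t`-measurable. -/
lemma stoppedIndicator_stronglyMeasurable {ℱ : Filtration ℝ m0} {τ : Ω → ℝ}
    (hτ : IsStoppingTime ℱ (fun ω => ((τ ω : ℝ) : WithTop ℝ))) {ξ : Ω → ℝ}
    (hξ : StronglyMeasurable[hτ.measurableSpace] ξ) (t : ℝ) :
    StronglyMeasurable[ℱ t] (Set.indicator {ω | τ ω ≤ t} ξ) := by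
  have hm : Measurable[hτ.measurableSpace] ξ := hξ.measurable
  have hmeas : Measurable[ℱ t] (Set.indicator {ω | τ ω ≤ t} ξ) := by
    intro s hs
    have hbase : MeasurableSet[ℱ t] (ξ ⁻¹' s ∩ {ω | τ ω ≤ t}) :=
      by
        have h := ((hτ.measurableSet _).mp (hm hs)).2 t
        simpa only [WithTop.coe_le_coe] using h
    by_cases h0 : (0 : ℝ) ∈ s
    · have heq : Set.indicator {ω | τ ω ≤ t} ξ ⁻¹' s
          = (ξ ⁻¹' s ∩ {ω | τ ω ≤ t}) ∪ {ω | τ ω ≤ t}ᶜ := by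
        ext ω
        by_cases hω : τ ω ≤ t <;>
          simp [Set.indicator_apply, hω, h0]
      rw [heq]
      exact hbase.union (by simpa only [WithTop.coe_le_coe] using hτ t : MeasurableSet[ℱ t] {ω | τ ω ≤ t}).compl
    · have heq : Set.indicator {ω | τ ω ≤ t} ξ ⁻¹' s = ξ ⁻¹' s ∩ {ω | τ ω ≤ t} := by
        ext ω
        by_cases hω : τ ω ≤ t <;>
          simp [Set.indicator_apply, hω, h0]
      rw [heq]; exact hbase
  exact hmeas.stronglyMeasurable

/-- Lemma 3.3: if `ξ` is `F_τ`-measurable, `f(·,y)` vanishes on `(τ, T]` and `V` has no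
variation on `(τ, T]`, then any class-(D) solution of BSDE`(ξ, f + dV)` on `[0,T]`
satisfies `(Y_{t∧τ}, M_{t∧τ}) = (Y_t, M_t)` for `t ∈ [0,T]`, i.e. `Y` and `M` are
constant on `[τ, T]`. -/
theorem bsde_stopped
    (P : Measure Ω) [IsProbabilityMeasure P] (ℱ : Filtration ℝ m0) (T : ℝ) (hT : 0 ≤ T)
    (ξ : Ω → ℝ) (f : ℝ → Ω → ℝ → ℝ) (V : ℝ → Ω → ℝ)
    (hV : IsFVProcess ℱ T V)
    (Y M : ℝ → Ω → ℝ)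
    (hsol : IsBSDESol P ℱ T ξ f V Y M) (hD : ClassDOn P ℱ T Y)
    (τ : Ω → ℝ) (hτ : IsStoppingTime ℱ (fun ω => ((τ ω : ℝ) : WithTop ℝ))) (hτT : ∀ ω, τ ω ∈ Set.Icc 0 T)
    (hξτ : StronglyMeasurable[hτ.measurableSpace] ξ)
    (hfτ : ∀ ω, ∀ t ∈ Set.Ioc (τ ω) T, ∀ y : ℝ, f t ω y = 0)
    (hVτ : ∀ᵐ ω ∂P, eVariationOn (fun t => V t ω) (Set.Icc 0 T)
        = eVariationOn (fun t => V t ω) (Set.Icc 0 (τ ω))) :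
    ∀ᵐ ω ∂P, ∀ t ∈ Set.Icc 0 T,
      Y (min t (τ ω)) ω = Y t ω ∧ M (min t (τ ω)) ω = M t ω := by
  classical
  -- Step 0 : pathwise representation `Y s = ξ - (M T - M s)` for `s ∈ [τ, T]`.
  have hstar : ∀ᵐ ω ∂P, ∀ s ∈ Set.Icc (τ ω) T,
      Y s ω = ξ ω - (M T ω - M s ω) := by
    filter_upwards [hsol.eqn, hVτ] with ω heq hvar
    intro s hs
    have h0s : (0:ℝ) ≤ s := le_trans (hτT ω).1 hs.1
    have hVconst : V T ω = V s ω := by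
      have hadd := eVariationOn.Icc_add_Icc (fun u => V u ω)
        (s := Set.univ) (hτT ω).1 (hτT ω).2 (Set.mem_univ (τ ω))
      simp only [Set.univ_inter] at hadd
      have hfin : eVariationOn (fun u => V u ω) (Set.Icc 0 (τ ω)) ≠ ⊤ := by
        rw [← hvar]; exact (hV.finiteVar ω).ne
      have hzero : eVariationOn (fun u => V u ω) (Set.Icc (τ ω) T) = 0 := by
        have h2 : eVariationOn (fun u => V u ω) (Set.Icc 0 (τ ω))
            + eVariationOn (fun u => V u ω) (Set.Icc (τ ω) T)
            = eVariationOn (fun u => V u ω) (Set.Icc 0 (τ ω)) + 0 := by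
          rw [add_zero, hadd, hvar]
        exact (ENNReal.add_right_inj hfin).mp h2
      have hedist := (eVariationOn.eq_zero_iff _).mp hzero T ⟨(hτT ω).2, le_rfl⟩ s hs
      exact edist_eq_zero.mp hedist
    have hint0 : (∫ u in Set.Ioc s T, f u ω (Y u ω)) = 0 := by
      rw [MeasureTheory.setIntegral_congr_fun measurableSet_Ioc
        (fun u hu => hfτ ω u ⟨lt_of_le_of_lt hs.1 hu.1, hu.2⟩ (Y u ω))]
      simp
    have h := heq s ⟨h0s, hs.2⟩
    rw [hint0, hVconst] at h
    linarith
  -- Step 1 : the key conditional-expectation argument : `Y t = ξ` a.e. on `{τ ≤ t}`.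
  have key : ∀ t, t ∈ Set.Icc 0 T → ∀ᵐ ω ∂P, τ ω ≤ t → Y t ω = ξ ω := by
    intro t ht
    obtain ⟨σ, hσs, hσt, hσm⟩ := hsol.locMartM
    obtain ⟨hFmeas, hFui, C, hFC⟩ := hD
    set S := {τ' : Ω → ℝ // IsStoppingTime ℱ (fun ω => ((τ' ω : ℝ) : WithTop ℝ)) ∧ ∀ ω, τ' ω ∈ Set.Icc 0 T} with hS_def
    set F : S → Ω → ℝ := fun j ω => Y (j.1 ω) ω with hF_def
    let i1 : ℕ → S := fun n => ⟨fun ω => min (max (σ n ω) 0) T,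
      by simpa only [WithTop.coe_min, WithTop.coe_max] using ((hσs n).max_const 0).min_const T,
      fun ω => ⟨le_min (le_max_right _ _) hT, min_le_right _ _⟩⟩
    let i2 : ℕ → S := fun n => ⟨fun ω => min (max (σ n ω) 0) t,
      by simpa only [WithTop.coe_min, WithTop.coe_max] using ((hσs n).max_const 0).min_const t,
      fun ω => ⟨le_min (le_max_right _ _) ht.1, le_trans (min_le_right _ _) ht.2⟩⟩
    let jT : S := ⟨fun _ => T, isStoppingTime_const ℱ T, fun _ => ⟨hT, le_rfl⟩⟩
    let jt : S := ⟨fun _ => t, isStoppingTime_const ℱ t, fun _ => ht⟩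
    set A : Set Ω := {ω | τ ω ≤ t} with hA_def
    have hA : MeasurableSet[ℱ t] A := by
      rw [hA_def]; simpa only [WithTop.coe_le_coe] using hτ t
    have hA0 : MeasurableSet A := ℱ.le t _ hA
    set G : ℕ → Ω → ℝ := fun n => A.indicator (fun ω => F (i1 n) ω - F (i2 n) ω)
      with hG_def
    set g : Ω → ℝ := A.indicator (fun ω => F jT ω - F jt ω) with hg_def
    have hGm : ∀ n, AEStronglyMeasurable (G n) P := fun n =>
      (((hFmeas (i1 n)).sub (hFmeas (i2 n))).indicator hA0)
    have hgm : AEStronglyMeasurable g P :=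
      ((hFmeas jT).sub (hFmeas jt)).indicator hA0
    have hgmem : MemLp g 1 P := by
      refine ⟨hgm, ?_⟩
      calc eLpNorm g 1 P ≤ eLpNorm (fun ω => F jT ω - F jt ω) 1 P := by
            rw [hg_def]; exact eLpNorm_indicator_le _
        _ ≤ eLpNorm (F jT) 1 P + eLpNorm (F jt) 1 P :=
            eLpNorm_sub_le (hFmeas jT) (hFmeas jt) le_rfl
        _ ≤ (C : ENNReal) + (C : ENNReal) := add_le_add (hFC jT) (hFC jt)
        _ < ⊤ := ENNReal.add_lt_top.mpr ⟨ENNReal.coe_lt_top, ENNReal.coe_lt_top⟩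
    have hGui : UnifIntegrable G 1 P := by
      intro ε hε
      obtain ⟨δ, hδ, hδ'⟩ := hFui (by positivity : (0:ℝ) < ε/2)
      refine ⟨δ, hδ, fun n s hs hsδ => ?_⟩
      have hmono : eLpNorm (s.indicator (G n)) 1 P
          ≤ eLpNorm (s.indicator (fun ω => F (i1 n) ω - F (i2 n) ω)) 1 P := by
        refine eLpNorm_mono fun ω => ?_
        simp only [hG_def, Set.indicator_apply]
        split_ifs <;> simp [Real.norm_eq_abs, abs_nonneg]
      refine hmono.trans ?_
      have hsplit : s.indicator (fun ω => F (i1 n) ω - F (i2 n) ω)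
          = fun ω => s.indicator (F (i1 n)) ω - s.indicator (F (i2 n)) ω := by
        funext ω; by_cases hωs : ω ∈ s <;> simp [hωs]
      rw [hsplit]
      calc eLpNorm (fun ω => s.indicator (F (i1 n)) ω - s.indicator (F (i2 n)) ω) 1 P
          ≤ eLpNorm (s.indicator (F (i1 n))) 1 P + eLpNorm (s.indicator (F (i2 n))) 1 P :=
            eLpNorm_sub_le ((hFmeas (i1 n)).indicator hs) ((hFmeas (i2 n)).indicator hs) le_rfl
        _ ≤ ENNReal.ofReal (ε/2) + ENNReal.ofReal (ε/2) :=
            add_le_add (hδ' (i1 n) s hs hsδ) (hδ' (i2 n) s hs hsδ)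
        _ = ENNReal.ofReal ε := by
            rw [← ENNReal.ofReal_add (by positivity) (by positivity)]
            norm_num
    have hGtend : ∀ ω, Tendsto (fun n => G n ω) atTop (𝓝 (g ω)) := by
      intro ω
      have hev : (fun n => G n ω) =ᶠ[atTop] fun _ => g ω := by
        filter_upwards [(hσt ω).eventually_ge_atTop T] with n hn
        have h1 : min (max (σ n ω) 0) T = T :=
          min_eq_right (le_max_of_le_left hn)
        have h2 : min (max (σ n ω) 0) t = t :=
          min_eq_right (le_trans ht.2 (le_max_of_le_left hn))
        have e1 : F (i1 n) ω = F jT ω := by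
          show Y (min (max (σ n ω) 0) T) ω = Y T ω
          rw [h1]
        have e2 : F (i2 n) ω = F jt ω := by
          show Y (min (max (σ n ω) 0) t) ω = Y t ω
          rw [h2]
        simp only [hG_def, hg_def, Set.indicator_apply]
        rw [e1, e2]
      exact Filter.Tendsto.congr' hev.symm tendsto_const_nhds
    have hL1 : Tendsto (fun n => eLpNorm (G n - g) 1 P) atTop (𝓝 0) :=
      tendsto_Lp_finite_of_tendsto_ae le_rfl ENNReal.one_ne_top hGm hgmem hGui
        (ae_of_all _ hGtend)
    -- the martingale part
    set D : ℕ → Ω → ℝ := fun n ω => M (min T (σ n ω)) ω - M (min t (σ n ω)) ω with hD_def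
    have hDint : ∀ n, Integrable (D n) P := fun n =>
      ((hσm n).integrable T).sub ((hσm n).integrable t)
    have hcondD : ∀ n, P[D n | ℱ t] =ᵐ[P] 0 := by
      intro n
      have h1 := (hσm n).condExp_ae_eq ht.2
      have h2 := (hσm n).condExp_ae_eq (le_refl t)
      have h3 := condExp_sub (m := ℱ t) (μ := P) ((hσm n).integrable T) ((hσm n).integrable t)
      have hDe : D n = (fun ω => M (min T (σ n ω)) ω) - fun ω => M (min t (σ n ω)) ω := rfl
      rw [hDe]
      filter_upwards [h1, h2, h3] with ω e1 e2 e3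
      simp only [Pi.sub_apply] at e1 e2 e3 ⊢
      rw [e3, e1, e2]
      simp
    have hcondX : ∀ n, P[A.indicator (D n)|ℱ t] =ᵐ[P] 0 := by
      intro n
      have h := condExp_indicator (hDint n) hA
      filter_upwards [h, hcondD n] with ω e1 e2
      rw [e1]
      simp only [Set.indicator_apply, Pi.zero_apply] at e2 ⊢
      split_ifs
      · exact e2
      · rfl
    have hGX : ∀ n, G n =ᵐ[P] A.indicator (D n) := by
      intro n
      filter_upwards [hstar] with ω hsω
      by_cases hω : ω ∈ A
      · have hτt : τ ω ≤ t := hω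
        simp only [hG_def, Set.indicator_of_mem hω, hD_def]
        show Y (min (max (σ n ω) 0) T) ω - Y (min (max (σ n ω) 0) t) ω
          = M (min T (σ n ω)) ω - M (min t (σ n ω)) ω
        rcases le_or_gt (σ n ω) t with hc1 | hc1
        · rw [min_eq_right (hc1.trans ht.2), min_eq_right hc1]
          rcases le_or_gt (σ n ω) 0 with hc2 | hc2
          · rw [max_eq_right hc2, min_eq_left hT, min_eq_left ht.1, sub_self, sub_self]
          · rw [max_eq_left hc2.le, min_eq_left (hc1.trans ht.2), min_eq_left hc1,
              sub_self, sub_self]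
        · have hmax : max (σ n ω) 0 = σ n ω := max_eq_left ((ht.1.trans hc1.le))
          rw [hmax, min_eq_right hc1.le]
          rcases le_or_gt (σ n ω) T with hc2 | hc2
          · rw [min_eq_left hc2, min_eq_right hc2, min_eq_left hc1.le]
            have hA1 := hsω (σ n ω) ⟨hτt.trans hc1.le, hc2⟩
            have hA2 := hsω t ⟨hτt, ht.2⟩
            linarith
          · rw [min_eq_right hc2.le, min_eq_left hc2.le, min_eq_left hc1.le]
            have hA1 := hsω T ⟨(hτT ω).2, le_rfl⟩
            have hA2 := hsω t ⟨hτt, ht.2⟩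
            linarith
      · simp only [hG_def, Set.indicator_of_notMem hω]
    have hGint : ∀ n, Integrable (G n) P := fun n =>
      (Integrable.indicator (hDint n) hA0).congr (hGX n).symm
    have hcondGn : ∀ n, P[G n|ℱ t] =ᵐ[P] 0 := fun n =>
      (condExp_congr_ae (hGX n)).trans (hcondX n)
    have hgint : Integrable g P := memLp_one_iff_integrable.mp hgmem
    have hbound : ∀ n, eLpNorm (P[g|ℱ t]) 1 P ≤ eLpNorm (G n - g) 1 P := by
      intro n
      have h1 : P[g|ℱ t] =ᵐ[P] P[g - G n|ℱ t] := by
        have h2 := condExp_sub (m := ℱ t) (μ := P) hgint (hGint n)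
        filter_upwards [h2, hcondGn n] with ω e2 e3
        rw [e2]
        simp only [Pi.sub_apply, Pi.zero_apply] at e3 ⊢
        rw [e3, sub_zero]
      calc eLpNorm (P[g|ℱ t]) 1 P = eLpNorm (P[g - G n|ℱ t]) 1 P := eLpNorm_congr_ae h1
        _ ≤ eLpNorm (g - G n) 1 P := eLpNorm_one_condExp_le_eLpNorm _
        _ = eLpNorm (-(G n - g)) 1 P := by rw [neg_sub]
        _ = eLpNorm (G n - g) 1 P := eLpNorm_neg _ _ _
    have hzero : eLpNorm (P[g|ℱ t]) 1 P = 0 :=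
      le_antisymm (ge_of_tendsto' hL1 hbound) zero_le
    have hcondg : P[g|ℱ t] =ᵐ[P] 0 :=
      (eLpNorm_eq_zero_iff
        ((stronglyMeasurable_condExp.mono (ℱ.le t)).aestronglyMeasurable) one_ne_zero).mp hzero
    -- identify `g` with the `ℱ t`-measurable function `1_A (ξ - Y t)`
    have hYT : ∀ᵐ ω ∂P, Y T ω = ξ ω := by
      filter_upwards [hstar] with ω hsω
      have := hsω T ⟨(hτT ω).2, le_rfl⟩
      linarith
    set Z : Ω → ℝ := A.indicator (fun ω => ξ ω - Y t ω) with hZ_def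
    have hZg : Z =ᵐ[P] g := by
      filter_upwards [hYT] with ω hY
      have hFT : F jT ω = Y T ω := rfl
      have hFt : F jt ω = Y t ω := rfl
      by_cases hω : ω ∈ A
      · simp only [hZ_def, hg_def, Set.indicator_of_mem hω, hFT, hFt, hY]
      · simp only [hZ_def, hg_def, Set.indicator_of_notMem hω]
    have hZsm : StronglyMeasurable[ℱ t] Z := by
      have h1 := stoppedIndicator_stronglyMeasurable hτ hξτ t
      have h2 : StronglyMeasurable[ℱ t] (A.indicator (fun ω => Y t ω)) :=
        ((hsol.adaptedY t).indicator hA).stronglyMeasurable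
      have hZe : Z = fun ω => Set.indicator {ω | τ ω ≤ t} ξ ω
          - A.indicator (fun ω => Y t ω) ω := by
        funext ω
        by_cases hω : ω ∈ A <;>
          simp [hZ_def, Set.indicator_apply, hω, hA_def] <;> split_ifs <;> ring
      rw [hZe]
      exact h1.sub h2
    have hZint : Integrable Z P := hgint.congr hZg.symm
    have hZeq : P[Z|ℱ t] = Z := condExp_of_stronglyMeasurable (ℱ.le t) hZsm hZint
    have hZ0 : Z =ᵐ[P] 0 := by
      rw [← hZeq]
      exact (condExp_congr_ae hZg).trans hcondg
    filter_upwards [hZ0] with ω hω hτt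
    have hmem : ω ∈ A := hτt
    simp only [hZ_def, Set.indicator_of_mem hmem, Pi.zero_apply] at hω
    linarith
  -- Step 2 : countable version over rationals
  have hkeyQ : ∀ᵐ ω ∂P, ∀ q : ℚ, (q:ℝ) ∈ Set.Icc 0 T → τ ω ≤ q → Y q ω = ξ ω := by
    rw [ae_all_iff]
    intro q
    by_cases hq : (q:ℝ) ∈ Set.Icc 0 T
    · filter_upwards [key q hq] with ω h hq' hτq
      exact h hτq
    · exact ae_of_all _ fun ω h => (hq h).elim
  -- Step 3 : pathwise conclusion
  filter_upwards [hstar, hsol.cadlagY, hkeyQ] with ω hs hcad hq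
  have hτω := hτT ω
  have hconst : ∀ s ∈ Set.Icc (τ ω) T, Y s ω = ξ ω := by
    intro s hsmem
    rcases eq_or_lt_of_le hsmem.2 with hsT | hsT
    · rw [hsT]
      have := hs T ⟨hτω.2, le_rfl⟩
      linarith
    · have hex : ∀ k : ℕ, ∃ q : ℚ, s < (q:ℝ) ∧ (q:ℝ) < min T (s + 1/((k:ℝ)+1)) := by
        intro k
        exact exists_rat_btwn (lt_min hsT (lt_add_of_pos_right s (by positivity)))
      choose q hq1 hq2 using hex
      have hqY : ∀ k, Y (q k) ω = ξ ω := by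
        intro k
        apply hq (q k)
        · constructor
          · exact le_trans (le_trans hτω.1 hsmem.1) (hq1 k).le
          · exact le_trans (hq2 k).le (min_le_left _ _)
        · exact hsmem.1.trans (hq1 k).le
      have htend : Tendsto (fun k => ((q k : ℝ))) atTop (𝓝 s) := by
        have hup : ∀ k : ℕ, (q k:ℝ) ≤ s + 1/((k:ℝ)+1) := fun k =>
          le_trans (hq2 k).le (min_le_right _ _)
        have hlow : ∀ k, s ≤ (q k:ℝ) := fun k => (hq1 k).le
        have h1 : Tendsto (fun k : ℕ => s + 1/((k:ℝ)+1)) atTop (𝓝 (s + 0)) :=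
          tendsto_const_nhds.add tendsto_one_div_add_atTop_nhds_zero_nat
        rw [add_zero] at h1
        exact tendsto_of_tendsto_of_tendsto_of_le_of_le tendsto_const_nhds h1 hlow hup
      have htendW : Tendsto (fun k => ((q k : ℝ))) atTop (𝓝[Set.Ici s] s) := by
        rw [tendsto_nhdsWithin_iff]
        exact ⟨htend, Eventually.of_forall fun k => (hq1 k).le⟩
      have hcont := (hcad s).1
      have hlim : Tendsto (fun k => Y (q k) ω) atTop (𝓝 (Y s ω)) :=
        Filter.Tendsto.comp hcont htendW
      have hlim' : Tendsto (fun k => Y (q k) ω) atTop (𝓝 (ξ ω)) := by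
        simp only [hqY]
        exact tendsto_const_nhds
      exact tendsto_nhds_unique hlim hlim'
  intro t ht
  by_cases hcase : τ ω ≤ t
  · rw [min_eq_right hcase]
    constructor
    · rw [hconst (τ ω) ⟨le_rfl, hτω.2⟩, hconst t ⟨hcase, ht.2⟩]
    · have h1 := hs t ⟨hcase, ht.2⟩
      have h2 := hs (τ ω) ⟨le_rfl, hτω.2⟩
      have e1 := hconst t ⟨hcase, ht.2⟩
      have e2 := hconst (τ ω) ⟨le_rfl, hτω.2⟩
      linarith
  · rw [min_eq_left (le_of_not_ge hcase)]
    exact ⟨rfl, rfl⟩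

end
end
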